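/- arXiv:2603.18952 — 6 statements merged into one kernel-verified Lean document; each statement's English description precedes it below -/
import Mathlib

section
/- For every integer k ≥ 4 and every real ε > 0 there exists N such that for every integer n ≥ N and every integer e with ⌊n²/4⌋ + 1 ≤ e ≤ n(n−1)/2, we have f(n, e, C_{2k+1}) ≤ e/2 + (n/2)·√(e − n²/4) + ε·n². -/
open SimpleGraph

/-- The maximal anti-Ramsey number `f(n, e, C_L)`: the minimum integer `c` for which there
exists an `n`-vertex simple graph with at least `e` edges admitting an edge-coloring using at
most `c` colors in which every copy of the cycle `C_L` (i.e. every cycle of length `L`) is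
rainbow. -/
noncomputable def maxAntiRamseyCycle (n e L : ℕ) : ℕ :=
  sInf {c : ℕ | ∃ G : SimpleGraph (Fin n), e ≤ G.edgeSet.ncard ∧
    ∃ χ : Sym2 (Fin n) → ℕ, (χ '' G.edgeSet).ncard ≤ c ∧
      ∀ ⦃v : Fin n⦄ (w : G.Walk v v), w.IsCycle → w.length = L → (w.edges.map χ).Nodup}

namespace ARaux

/-! ### A triangle code for unordered pairs of naturals -/

def code (x y : ℕ) : ℕ := max x y * (max x y - 1) / 2 + min x y

lemma code_comm (x y : ℕ) : code x y = code y x := by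
  simp [code, max_comm, min_comm]

lemma tri_aux {a b : ℕ} (hab : a < b) : b * (b - 1) / 2 + a < b * (b + 1) / 2 := by
  obtain ⟨c, rfl⟩ : ∃ c, b = c + 1 := ⟨b - 1, by omega⟩
  have h1 : (c+1) * ((c+1) + 1) = (c+1) * ((c+1) - 1) + 2 * (c+1) := by
    simp [Nat.add_sub_cancel]; ring
  have h2 : (c+1) * ((c+1) + 1) / 2 = (c+1) * ((c+1) - 1) / 2 + (c+1) := by
    rw [h1, Nat.add_mul_div_left _ _ (by norm_num : 0 < 2)]
  omega

lemma tri_mono {b d : ℕ} (hbd : b < d) : b * (b + 1) / 2 ≤ d * (d - 1) / 2 := by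
  apply Nat.div_le_div_right
  calc b * (b+1) ≤ (d-1) * d := Nat.mul_le_mul (by omega) (by omega)
  _ = d * (d-1) := by ring

lemma tri_inj {a b c d : ℕ} (hab : a < b) (hcd : c < d)
    (h : b * (b - 1) / 2 + a = d * (d - 1) / 2 + c) : a = c ∧ b = d := by
  rcases lt_trichotomy b d with hbd | rfl | hdb
  · exfalso
    have h1 := tri_aux hab
    have h2 := tri_mono hbd
    omega
  · omega
  · exfalso
    have h1 := tri_aux hcd
    have h2 := tri_mono hdb
    omega

lemma code_lt {x y m : ℕ} (hxy : x ≠ y) (hx : x < m) (hy : y < m) :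
    code x y < m * (m - 1) / 2 := by
  have h1 : min x y < max x y := by omega
  have h2 : max x y < m := by omega
  have h3 := tri_aux h1
  have h4 := tri_mono h2
  unfold code
  omega

lemma code_inj {x y x' y' : ℕ} (hxy : x ≠ y) (hxy' : x' ≠ y')
    (h : code x y = code x' y') :
    (x = x' ∧ y = y') ∨ (x = y' ∧ y = x') := by
  have h1 : min x y < max x y := by omega
  have h2 : min x' y' < max x' y' := by omega
  have := tri_inj h1 h2 h
  omega

/-! ### The graph: two disjoint cliques on `Fin n`, cut at `m` -/

def TC (n m : ℕ) : SimpleGraph (Fin n) where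
  Adj u v := u ≠ v ∧ ((u : ℕ) < m ↔ (v : ℕ) < m)
  symm := ⟨fun u v h => ⟨h.1.symm, h.2.symm⟩⟩
  loopless := ⟨fun u h => h.1 rfl⟩

instance (n m : ℕ) : DecidableRel (TC n m).Adj := fun u v =>
  show Decidable (u ≠ v ∧ ((u : ℕ) < m ↔ (v : ℕ) < m)) from inferInstance

lemma card_side (n m : ℕ) (hmn : m ≤ n) :
    (Finset.univ.filter (fun v : Fin n => (v : ℕ) < m)).card = m := by
  rw [← Fintype.card_subtype]
  have e : {v : Fin n // (v : ℕ) < m} ≃ Fin m :=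
    { toFun := fun x => ⟨(x.1 : ℕ), x.2⟩
      invFun := fun i => ⟨⟨(i : ℕ), lt_of_lt_of_le i.2 hmn⟩, i.2⟩
      left_inv := fun x => by ext; rfl
      right_inv := fun i => by ext; rfl }
  rw [Fintype.card_congr e, Fintype.card_fin]

lemma deg_side_lt (n m : ℕ) (hmn : m ≤ n) (u : Fin n) (hu : (u : ℕ) < m) :
    (TC n m).degree u = m - 1 := by
  have hset : (TC n m).neighborFinset u
      = (Finset.univ.filter (fun v : Fin n => (v : ℕ) < m)).erase u := by
    ext v
    simp only [SimpleGraph.mem_neighborFinset, Finset.mem_erase, Finset.mem_filter,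
      Finset.mem_univ, true_and]
    constructor
    · rintro ⟨h1, h2⟩; exact ⟨fun h => h1 h.symm, h2.mp hu⟩
    · rintro ⟨h1, h2⟩; exact ⟨fun h => h1 h.symm, by constructor <;> intro <;> assumption⟩
  rw [SimpleGraph.degree, hset, Finset.card_erase_of_mem (by simp [hu]), card_side n m hmn]

lemma deg_side_ge (n m : ℕ) (hmn : m ≤ n) (u : Fin n) (hu : ¬ (u : ℕ) < m) :
    (TC n m).degree u = n - m - 1 := by
  have hset : (TC n m).neighborFinset u
      = (Finset.univ.filter (fun v : Fin n => ¬ (v : ℕ) < m)).erase u := by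
    ext v
    simp only [SimpleGraph.mem_neighborFinset, Finset.mem_erase, Finset.mem_filter,
      Finset.mem_univ, true_and]
    constructor
    · rintro ⟨h1, h2⟩; exact ⟨fun h => h1 h.symm, fun hv => hu (h2.mpr hv)⟩
    · rintro ⟨h1, h2⟩
      refine ⟨fun h => h1 h.symm, ?_⟩
      constructor <;> intro h <;> [exact absurd h hu; exact absurd h h2]
  have hcard : (Finset.univ.filter (fun v : Fin n => ¬ (v : ℕ) < m)).card = n - m := by
    have := Finset.card_filter_add_card_filter_not
      (s := (Finset.univ : Finset (Fin n))) (p := fun v : Fin n => (v : ℕ) < m)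
    rw [card_side n m hmn] at this
    simp only [Finset.card_univ, Fintype.card_fin] at this
    omega
  rw [SimpleGraph.degree, hset, Finset.card_erase_of_mem
    (by simp only [Finset.mem_filter, Finset.mem_univ, true_and]; exact hu), hcard]

lemma TC_edge_card (n m : ℕ) (hmn : m ≤ n) :
    2 * (TC n m).edgeFinset.card = m * (m - 1) + (n - m) * (n - m - 1) := by
  rw [← SimpleGraph.sum_degrees_eq_twice_card_edges]
  rw [← Finset.sum_filter_add_sum_filter_not Finset.univ (fun v : Fin n => (v : ℕ) < m)]
  have h1 : ∑ v ∈ Finset.univ.filter (fun v : Fin n => (v : ℕ) < m), (TC n m).degree v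
      = m * (m - 1) := by
    rw [Finset.sum_congr rfl (fun v hv => deg_side_lt n m hmn v (Finset.mem_filter.mp hv).2)]
    rw [Finset.sum_const, card_side n m hmn, smul_eq_mul]
  have h2 : ∑ v ∈ Finset.univ.filter (fun v : Fin n => ¬ (v : ℕ) < m), (TC n m).degree v
      = (n - m) * (n - m - 1) := by
    rw [Finset.sum_congr rfl (fun v hv => deg_side_ge n m hmn v (Finset.mem_filter.mp hv).2)]
    rw [Finset.sum_const, smul_eq_mul]
    congr 1
    have := Finset.card_filter_add_card_filter_not
      (s := (Finset.univ : Finset (Fin n))) (p := fun v : Fin n => (v : ℕ) < m)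
    rw [card_side n m hmn] at this
    simp only [Finset.card_univ, Fintype.card_fin] at this
    omega
  rw [h1, h2]

/-! ### The coloring -/

def rho (m : ℕ) {n : ℕ} (u : Fin n) : ℕ := if (u : ℕ) < m then u else (u : ℕ) - m

noncomputable def chi (n m : ℕ) : Sym2 (Fin n) → ℕ :=
  Sym2.lift ⟨fun u v => code (rho m u) (rho m v), fun u v => code_comm _ _⟩

lemma chi_mk (n m : ℕ) (u v : Fin n) : chi n m s(u, v) = code (rho m u) (rho m v) := rfl

lemma rho_lt {n m : ℕ} (h2m : n ≤ 2 * m) (u : Fin n) : rho m u < m := by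
  have := u.isLt
  unfold rho
  split_ifs with h
  · exact h
  · omega

lemma rho_inj {n m : ℕ} {u v : Fin n}
    (hside : ((u : ℕ) < m ↔ (v : ℕ) < m)) (h : rho m u = rho m v) : u = v := by
  apply Fin.ext
  unfold rho at h
  by_cases h1 : (u : ℕ) < m
  · have h2 : (v : ℕ) < m := hside.mp h1
    rw [if_pos h1, if_pos h2] at h; exact h
  · have h2 : ¬ (v : ℕ) < m := fun hh => h1 (hside.mpr hh)
    rw [if_neg h1, if_neg h2] at h; omega

lemma walk_side {n m : ℕ} {a b : Fin n} (w : (TC n m).Walk a b) :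
    ((a : ℕ) < m ↔ (b : ℕ) < m) := by
  induction w with
  | nil => exact Iff.rfl
  | cons h p ih => exact h.2.trans ih

lemma TC_colors (n m : ℕ) (h2m : n ≤ 2 * m) :
    (chi n m '' (TC n m).edgeSet).ncard ≤ m * (m - 1) / 2 := by
  have hsub : chi n m '' (TC n m).edgeSet ⊆ ↑(Finset.range (m * (m - 1) / 2)) := by
    rintro x ⟨e, he, rfl⟩
    induction e using Sym2.ind with
    | _ a b =>
      rw [SimpleGraph.mem_edgeSet] at he
      obtain ⟨hne, hside⟩ := he
      have hr : rho m a ≠ rho m b := fun h => hne (rho_inj hside h)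
      simp only [Finset.coe_range, Set.mem_Iio, chi_mk]
      exact code_lt hr (rho_lt h2m a) (rho_lt h2m b)
  calc (chi n m '' (TC n m).edgeSet).ncard
      ≤ (↑(Finset.range (m * (m - 1) / 2)) : Set ℕ).ncard :=
        Set.ncard_le_ncard hsub (Finset.finite_toSet _)
    _ = m * (m - 1) / 2 := by rw [Set.ncard_coe_finset, Finset.card_range]

lemma TC_rainbow (n m : ℕ) (h2m : n ≤ 2 * m) {v : Fin n}
    (w : (TC n m).Walk v v) (hw : w.IsCycle) :
    (w.edges.map (chi n m)).Nodup := by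
  refine List.Nodup.map_on ?_ hw.edges_nodup
  intro e1 he1 e2 he2 hchi
  induction e1 using Sym2.ind with
  | _ a b =>
    induction e2 using Sym2.ind with
    | _ c d =>
      have hadj1 : (TC n m).Adj a b := w.edges_subset_edgeSet he1
      have hadj2 : (TC n m).Adj c d := w.edges_subset_edgeSet he2
      have hav : ((v : ℕ) < m ↔ (a : ℕ) < m) :=
        walk_side (w.takeUntil a (w.fst_mem_support_of_mem_edges he1))
      have hcv : ((v : ℕ) < m ↔ (c : ℕ) < m) :=
        walk_side (w.takeUntil c (w.fst_mem_support_of_mem_edges he2))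
      have hac : ((a : ℕ) < m ↔ (c : ℕ) < m) := hav.symm.trans hcv
      have hab : ((a : ℕ) < m ↔ (b : ℕ) < m) := hadj1.2
      have hcd : ((c : ℕ) < m ↔ (d : ℕ) < m) := hadj2.2
      have hr1 : rho m a ≠ rho m b := fun h => hadj1.1 (rho_inj hab h)
      have hr2 : rho m c ≠ rho m d := fun h => hadj2.1 (rho_inj hcd h)
      rw [chi_mk, chi_mk] at hchi
      rcases code_inj hr1 hr2 hchi with ⟨h1, h2⟩ | ⟨h1, h2⟩
      · have hA : a = c := rho_inj hac h1
        have hB : b = d := rho_inj (by rw [← hab, ← hcd]; exact hac) h2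
        rw [hA, hB]
      · have hA : a = d := rho_inj (hac.trans hcd) h1
        have hB : b = c := rho_inj (hab.symm.trans hac) h2
        rw [hA, hB, Sym2.eq_swap]

end ARaux

set_option maxHeartbeats 1000000 in
open ARaux in
/-- For every `k ≥ 4` and `ε > 0`, for all sufficiently large `n` and all
`⌊n²/4⌋ + 1 ≤ e ≤ n(n-1)/2`, we have `f(n, e, C_{2k+1}) ≤ e/2 + (n/2)·√(e - n²/4) + ε n²`. -/
theorem statement3 (k : ℕ) (hk : 4 ≤ k) (ε : ℝ) (hε : 0 < ε) :
    ∃ N : ℕ, ∀ n : ℕ, N ≤ n → ∀ e : ℕ, n ^ 2 / 4 + 1 ≤ e → e ≤ n * (n - 1) / 2 →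
      (maxAntiRamseyCycle n e (2 * k + 1) : ℝ) ≤
        (e : ℝ) / 2 + (n : ℝ) / 2 * Real.sqrt ((e : ℝ) - (n : ℝ) ^ 2 / 4) + ε * n ^ 2 := by
  refine ⟨⌈(4/ε)^2⌉₊ + ⌈16/ε⌉₊ + 16, ?_⟩
  intro n hn e he1 he2
  have hn16 : 16 ≤ n := by omega
  set T : ℝ := (e : ℝ) - (n : ℝ) ^ 2 / 4 with hT_def
  have h4e : n ^ 2 < 4 * e := by omega
  have hT0 : 0 < T := by
    have hc : ((n : ℝ)) ^ 2 < 4 * e := by exact_mod_cast h4e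
    rw [hT_def]; linarith
  have hTn0 : (0 : ℝ) ≤ T + n := by positivity
  set s : ℕ := ⌈Real.sqrt (T + n)⌉₊ with hs_def
  set m : ℕ := min n (n / 2 + 1 + s) with hm_def
  clear_value m
  clear_value s
  clear_value T
  have hmn : m ≤ n := by omega
  have h2m : n ≤ 2 * m := by omega
  have hm1 : 1 ≤ m := by omega
  have h2e : 2 * e ≤ n * (n - 1) := by
    have h := he2
    set p := n * (n - 1) with hp
    omega
  -- the edge count of the two-clique graph is big enough
  have hedges : 2 * e ≤ m * (m - 1) + (n - m) * (n - m - 1) := by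
    by_cases hcase : m = n
    · rw [hcase, Nat.sub_self]
      simp only [Nat.zero_mul, Nat.add_zero]
      omega
    · have hm_lt : m < n := lt_of_le_of_ne hmn hcase
      have hm_eq : m = n / 2 + 1 + s := by omega
      have hs_ge : Real.sqrt (T + n) ≤ (s : ℝ) := by
        rw [hs_def]; exact Nat.le_ceil _
      have hsq : Real.sqrt (T + n) ^ 2 = T + n := Real.sq_sqrt hTn0
      have hsqnn : 0 ≤ Real.sqrt (T + n) := Real.sqrt_nonneg _
      have hhalf : ((n : ℝ) - 1) / 2 ≤ ((n / 2 : ℕ) : ℝ) := by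
        have h1 : n - 1 ≤ 2 * (n / 2) := by omega
        have h2 : ((n - 1 : ℕ) : ℝ) ≤ ((2 * (n / 2) : ℕ) : ℝ) := Nat.cast_le.mpr h1
        push_cast [Nat.cast_sub (by omega : 1 ≤ n)] at h2
        linarith
      have hmR : (n : ℝ) / 2 + 1 / 2 + Real.sqrt (T + n) ≤ (m : ℝ) := by
        have : (m : ℝ) = ((n / 2 : ℕ) : ℝ) + 1 + (s : ℝ) := by
          rw [hm_eq]; push_cast; ring
        rw [this]; linarith
      have hsq' : Real.sqrt (T + n) * Real.sqrt (T + n) = T + n :=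
        Real.mul_self_sqrt hTn0
      have key : ((2 * e : ℕ) : ℝ) ≤ ((m * (m - 1) + (n - m) * (n - m - 1) : ℕ) : ℝ) := by
        have h1nm : 1 ≤ n - m := by omega
        push_cast [Nat.cast_sub hm1, Nat.cast_sub hmn, Nat.cast_sub h1nm]
        have heT : (e : ℝ) = (n : ℝ) ^ 2 / 4 + T := by rw [hT_def]; ring
        have hd1 : (0 : ℝ) ≤ 1 / 2 + Real.sqrt (T + n) := by linarith
        have hd2 : 1 / 2 + Real.sqrt (T + n) ≤ (m : ℝ) - (n : ℝ) / 2 := by linarith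
        have hms := mul_self_le_mul_self hd1 hd2
        nlinarith [hms, hsq', hsqnn, Nat.cast_nonneg (α := ℝ) n]
      exact_mod_cast key
  -- real bounds on sqrt quantities
  have hsT : Real.sqrt T ≤ (n : ℝ) / 2 := by
    have he_le : (e : ℝ) ≤ (n : ℝ) ^ 2 / 2 := by
      have h1 : 2 * e ≤ n * n := le_trans h2e (Nat.mul_le_mul_left n (Nat.sub_le n 1))
      have h2 : ((2 * e : ℕ) : ℝ) ≤ ((n * n : ℕ) : ℝ) := Nat.cast_le.mpr h1
      push_cast at h2
      nlinarith
    have hTle : T ≤ ((n : ℝ) / 2) ^ 2 := by rw [hT_def]; nlinarith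
    calc Real.sqrt T ≤ Real.sqrt (((n : ℝ) / 2) ^ 2) := Real.sqrt_le_sqrt hTle
      _ = (n : ℝ) / 2 := Real.sqrt_sq (by positivity)
  have hsub : Real.sqrt (T + n) ≤ Real.sqrt T + Real.sqrt (n : ℝ) := by
    have h1 : T + (n : ℝ) ≤ (Real.sqrt T + Real.sqrt (n : ℝ)) ^ 2 := by
      have e1 := Real.sq_sqrt hT0.le
      have e2 := Real.sq_sqrt (Nat.cast_nonneg (α := ℝ) n)
      nlinarith [Real.sqrt_nonneg T, Real.sqrt_nonneg ((n : ℝ))]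
    calc Real.sqrt (T + n) ≤ Real.sqrt ((Real.sqrt T + Real.sqrt (n : ℝ)) ^ 2) :=
          Real.sqrt_le_sqrt h1
      _ = _ := Real.sqrt_sq (by positivity)
  have hmup : (m : ℝ) ≤ (n : ℝ) / 2 + Real.sqrt T + Real.sqrt (n : ℝ) + 2 := by
    have h1 : m ≤ n / 2 + 1 + s := by omega
    have h2 : ((n / 2 : ℕ) : ℝ) ≤ (n : ℝ) / 2 := Nat.cast_div_le
    have h3 : (s : ℝ) < Real.sqrt (T + n) + 1 := by
      rw [hs_def]; exact Nat.ceil_lt_add_one (Real.sqrt_nonneg _)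
    have h4 : ((m : ℕ) : ℝ) ≤ ((n / 2 + 1 + s : ℕ) : ℝ) := Nat.cast_le.mpr h1
    push_cast at h4
    linarith
  -- consequences of n being large
  have hNa : ((4 / ε) ^ 2 : ℝ) ≤ n := by
    have h1 : ⌈((4 / ε) ^ 2 : ℝ)⌉₊ ≤ n := by omega
    calc ((4 / ε) ^ 2 : ℝ) ≤ (⌈((4 / ε) ^ 2 : ℝ)⌉₊ : ℝ) := Nat.le_ceil _
      _ ≤ n := Nat.cast_le.mpr h1
  have hsn : 4 / ε ≤ Real.sqrt (n : ℝ) := by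
    calc (4 / ε : ℝ) = Real.sqrt ((4 / ε) ^ 2) := (Real.sqrt_sq (by positivity)).symm
      _ ≤ _ := Real.sqrt_le_sqrt hNa
  have hNb : (16 / ε : ℝ) ≤ n := by
    have h1 : ⌈(16 / ε : ℝ)⌉₊ ≤ n := by omega
    calc (16 / ε : ℝ) ≤ (⌈(16 / ε : ℝ)⌉₊ : ℝ) := Nat.le_ceil _
      _ ≤ n := Nat.cast_le.mpr h1
  have hsqn : Real.sqrt (n : ℝ) ^ 2 = (n : ℝ) := Real.sq_sqrt (Nat.cast_nonneg _)
  have hsqT : Real.sqrt T ^ 2 = T := Real.sq_sqrt hT0.le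
  have hnR : (16 : ℝ) ≤ n := by exact_mod_cast hn16
  have hsnn : 0 ≤ Real.sqrt (n : ℝ) := Real.sqrt_nonneg _
  have hsTn : 0 ≤ Real.sqrt T := Real.sqrt_nonneg _
  have hsn_le : Real.sqrt (n : ℝ) ≤ (n : ℝ) := by nlinarith
  have hxx : Real.sqrt (n : ℝ) * Real.sqrt (n : ℝ) = (n : ℝ) :=
    Real.mul_self_sqrt (Nat.cast_nonneg _)
  have hA : 4 * (n : ℝ) * Real.sqrt (n : ℝ) ≤ ε * n ^ 2 := by
    have h1 : 4 ≤ ε * Real.sqrt (n : ℝ) := by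
      rw [div_le_iff₀ hε] at hsn; linarith
    calc 4 * (n : ℝ) * Real.sqrt (n : ℝ) = 4 * ((n : ℝ) * Real.sqrt (n : ℝ)) := by ring
      _ ≤ (ε * Real.sqrt (n : ℝ)) * ((n : ℝ) * Real.sqrt (n : ℝ)) :=
          mul_le_mul_of_nonneg_right h1 (by positivity)
      _ = ε * ((n : ℝ) * (Real.sqrt (n : ℝ) * Real.sqrt (n : ℝ))) := by ring
      _ = ε * ((n : ℝ) * (n : ℝ)) := by rw [hxx]
      _ = ε * n ^ 2 := by ring
  have hB : 16 * (n : ℝ) ≤ ε * n ^ 2 := by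
    have h1 : 16 ≤ ε * (n : ℝ) := by rw [div_le_iff₀ hε] at hNb; linarith
    calc 16 * (n : ℝ) ≤ (ε * (n : ℝ)) * (n : ℝ) :=
          mul_le_mul_of_nonneg_right h1 (Nat.cast_nonneg _)
      _ = ε * n ^ 2 := by ring
  -- the color bound in ℝ
  have hcolR : ((m * (m - 1) / 2 : ℕ) : ℝ) ≤ (e : ℝ) / 2 + (n : ℝ) / 2 * Real.sqrt T
      + ε * n ^ 2 := by
    have h1 : ((m * (m - 1) / 2 : ℕ) : ℝ) ≤ ((m * (m - 1) : ℕ) : ℝ) / 2 := Nat.cast_div_le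
    have h2 : ((m * (m - 1) : ℕ) : ℝ) ≤ (m : ℝ) * (m : ℝ) := by
      have e1 : ((m * (m - 1) : ℕ) : ℝ) = (m : ℝ) * ((m - 1 : ℕ) : ℝ) := by push_cast; ring
      have e2 : ((m - 1 : ℕ) : ℝ) ≤ (m : ℝ) := Nat.cast_le.mpr (Nat.sub_le m 1)
      rw [e1]
      exact mul_le_mul_of_nonneg_left e2 (Nat.cast_nonneg m)
    have hm0 : (0 : ℝ) ≤ m := Nat.cast_nonneg m
    have step1 : (m : ℝ) * (m : ℝ)
        ≤ ((n : ℝ) / 2 + Real.sqrt T + Real.sqrt (n : ℝ) + 2) ^ 2 := by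
      nlinarith [hmup, hm0]
    have heT : (e : ℝ) = (n : ℝ) ^ 2 / 4 + T := by rw [hT_def]; ring
    have hprod : ((n : ℝ) + 2 * Real.sqrt T) * (Real.sqrt (n : ℝ) + 2)
        ≤ (2 * n) * (Real.sqrt (n : ℝ) + 2) :=
      mul_le_mul_of_nonneg_right (by linarith) (by positivity)
    have step2 : ((n : ℝ) / 2 + Real.sqrt T + Real.sqrt (n : ℝ) + 2) ^ 2
        ≤ 2 * ((e : ℝ) / 2 + (n : ℝ) / 2 * Real.sqrt T) + 2 * (ε * n ^ 2) := by
      nlinarith [hA, hB, hsn_le, hnR, hsTn, hsnn]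
    linarith
  -- membership of the construction in the defining set
  have hmem : m * (m - 1) / 2 ∈ {c : ℕ | ∃ G : SimpleGraph (Fin n), e ≤ G.edgeSet.ncard ∧
      ∃ χ : Sym2 (Fin n) → ℕ, (χ '' G.edgeSet).ncard ≤ c ∧
        ∀ ⦃v : Fin n⦄ (w : G.Walk v v), w.IsCycle → w.length = 2 * k + 1 →
          (w.edges.map χ).Nodup} := by
    refine ⟨TC n m, ?_, chi n m, TC_colors n m h2m,
      fun v w hw _ => TC_rainbow n m h2m w hw⟩
    rw [← SimpleGraph.coe_edgeFinset, Set.ncard_coe_finset]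
    have := TC_edge_card n m hmn
    omega
  have hle : maxAntiRamseyCycle n e (2 * k + 1) ≤ m * (m - 1) / 2 := Nat.sInf_le hmem
  calc (maxAntiRamseyCycle n e (2 * k + 1) : ℝ)
      ≤ ((m * (m - 1) / 2 : ℕ) : ℝ) := Nat.cast_le.mpr hle
    _ ≤ (e : ℝ) / 2 + (n : ℝ) / 2 * Real.sqrt T + ε * n ^ 2 := hcolR
end

section
/- Let G be the disjoint union of two complete graphs on vertex sets A and B. If every edge within A is assigned a distinct color, every edge within B is assigned a distinct color, and the colors used on B are chosen among those used on A, then every cycle in G is rainbow (all its edges receive pairwise distinct colors); consequently, for any integers n, e with n = |A| + |B| and e ≤ n(n−1)/2 − |A|·|B|, and any k ≥ 1, this shows f(n, e, C_{2k+1}) ≤ |A|(|A|−1)/2. -/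
open SimpleGraph

/-- The number of edges of the disjoint union of two cliques. -/
theorem aux_card_edges {n : ℕ} (A : Finset (Fin n)) (G : SimpleGraph (Fin n))
    (hG : ∀ u v, G.Adj u v ↔ u ≠ v ∧ (u ∈ A ↔ v ∈ A)) :
    G.edgeSet.ncard = n.choose 2 - A.card * Aᶜ.card := by
  classical
  set cross : Finset (Sym2 (Fin n)) := (A ×ˢ Aᶜ).image (fun p => s(p.1, p.2)) with hcross
  have hmemc : ∀ a b : Fin n, s(a, b) ∈ cross ↔ (a ∈ A ∧ b ∉ A) ∨ (b ∈ A ∧ a ∉ A) := by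
    intro a b
    simp only [hcross, Finset.mem_image, Finset.mem_product, Finset.mem_compl, Prod.exists]
    constructor
    · rintro ⟨x, y, ⟨hx, hy⟩, h⟩
      rcases Sym2.eq_iff.1 h with ⟨rfl, rfl⟩ | ⟨rfl, rfl⟩
      · exact Or.inl ⟨hx, hy⟩
      · exact Or.inr ⟨hx, hy⟩
    · rintro (⟨ha, hb⟩ | ⟨hb, ha⟩)
      · exact ⟨a, b, ⟨ha, hb⟩, rfl⟩
      · exact ⟨b, a, ⟨hb, ha⟩, Sym2.eq_swap⟩
  have hcrosscard : cross.card = A.card * Aᶜ.card := by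
    rw [hcross, Finset.card_image_of_injOn, Finset.card_product]
    rintro ⟨a, b⟩ hab ⟨a', b'⟩ hab' h
    simp only [Finset.mem_coe, Finset.mem_product, Finset.mem_compl] at hab hab'
    dsimp only at h
    rcases Sym2.eq_iff.1 h with ⟨rfl, rfl⟩ | ⟨rfl, rfl⟩
    · rfl
    · exact absurd hab.1 hab'.2
  have hunion : (⊤ : SimpleGraph (Fin n)).edgeSet = G.edgeSet ∪ ↑cross := by
    ext e
    induction e with
    | h a b =>
      simp only [Set.mem_union, mem_edgeSet, top_adj, hG, Finset.mem_coe, hmemc]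
      constructor
      · intro hab
        by_cases ha : a ∈ A <;> by_cases hb : b ∈ A
        · exact Or.inl ⟨hab, iff_of_true ha hb⟩
        · exact Or.inr (Or.inl ⟨ha, hb⟩)
        · exact Or.inr (Or.inr ⟨hb, ha⟩)
        · exact Or.inl ⟨hab, iff_of_false ha hb⟩
      · rintro (⟨h, -⟩ | ⟨ha, hb⟩ | ⟨hb, ha⟩)
        · exact h
        · rintro rfl; exact hb ha
        · rintro rfl; exact ha hb
  have hdisj : Disjoint G.edgeSet ↑cross := by
    rw [Set.disjoint_left]
    intro e he hec
    induction e with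
    | h a b =>
      rw [Finset.mem_coe, hmemc] at hec
      have hab := (hG a b).1 he
      rcases hec with ⟨ha, hb⟩ | ⟨hb, ha⟩
      · exact hb (hab.2.1 ha)
      · exact ha (hab.2.2 hb)
  have htop : (⊤ : SimpleGraph (Fin n)).edgeSet.ncard = n.choose 2 := by
    rw [← SimpleGraph.coe_edgeFinset, Set.ncard_coe_finset,
      SimpleGraph.card_edgeFinset_top_eq_card_choose_two, Fintype.card_fin]
  rw [hunion, Set.ncard_union_eq hdisj (Set.toFinite _) (Set.toFinite _),
    Set.ncard_coe_finset, hcrosscard] at htop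
  omega

/-- Counting the non-diagonal `Sym2` elements supported in a finset. -/
theorem aux_card_sym2 {n : ℕ} (A : Finset (Fin n)) :
    (A.sym2.filter fun e => ¬ e.IsDiag).card = A.card.choose 2 := by
  classical
  have hdiag : A.sym2.filter (fun e => e.IsDiag) = A.image Sym2.diag := by
    ext e
    induction e with
    | h a b =>
      simp only [Finset.mem_filter, Finset.mk_mem_sym2_iff, Sym2.mk_isDiag_iff, Finset.mem_image]
      constructor
      · rintro ⟨⟨ha, -⟩, rfl⟩; exact ⟨a, ha, rfl⟩
      · rintro ⟨x, hx, h⟩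
        rw [Sym2.diag] at h
        rcases Sym2.eq_iff.1 h with ⟨rfl, rfl⟩ | ⟨rfl, rfl⟩ <;> exact ⟨⟨hx, hx⟩, rfl⟩
  have h1 : (A.sym2.filter fun e => ¬ e.IsDiag).card + (A.sym2.filter fun e => e.IsDiag).card
      = A.sym2.card := by
    rw [add_comm, Finset.card_filter_add_card_filter_not]
  have h2 : (A.sym2.filter fun e => e.IsDiag).card = A.card := by
    rw [hdiag, Finset.card_image_of_injective _ Sym2.diag_injective]
  have h3 := Finset.card_sym2 A
  have h4 : (A.card + 1).choose 2 = A.card + A.card.choose 2 := by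
    rw [Nat.choose_succ_succ, Nat.choose_one_right]
  omega

/-- Let `G` be the disjoint union of two complete graphs, on the vertex set `A` and on its
complement `B = Aᶜ`. If every edge within `A` gets a distinct color, every edge within `B` gets
a distinct color, and the colors used on `B` are among those used on `A`, then every cycle of
`G` is rainbow; consequently, for every `e ≤ n(n-1)/2 - |A||B|` and every `k ≥ 1`,
`f(n, e, C_{2k+1}) ≤ |A|(|A|-1)/2`. -/
theorem statement4 {n : ℕ} (A : Finset (Fin n)) (G : SimpleGraph (Fin n))
    (hG : ∀ u v, G.Adj u v ↔ u ≠ v ∧ (u ∈ A ↔ v ∈ A))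
    {C : Type*} (χ : Sym2 (Fin n) → C)
    (hA : ∀ e₁ ∈ G.edgeSet, ∀ e₂ ∈ G.edgeSet,
      (∀ x ∈ e₁, x ∈ A) → (∀ x ∈ e₂, x ∈ A) → χ e₁ = χ e₂ → e₁ = e₂)
    (hB : ∀ e₁ ∈ G.edgeSet, ∀ e₂ ∈ G.edgeSet,
      (∀ x ∈ e₁, x ∉ A) → (∀ x ∈ e₂, x ∉ A) → χ e₁ = χ e₂ → e₁ = e₂)
    (hBA : ∀ e₂ ∈ G.edgeSet, (∀ x ∈ e₂, x ∉ A) →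
      ∃ e₁ ∈ G.edgeSet, (∀ x ∈ e₁, x ∈ A) ∧ χ e₁ = χ e₂) :
    (∀ (v : Fin n) (w : G.Walk v v), w.IsCycle → (w.edges.map χ).Nodup) ∧
    ∀ e k : ℕ, 1 ≤ k → e ≤ n * (n - 1) / 2 - A.card * Aᶜ.card →
      maxAntiRamseyCycle n e (2 * k + 1) ≤ A.card * (A.card - 1) / 2 := by
  classical
  have key : ∀ (u v : Fin n) (w : G.Walk u v), ∀ x ∈ w.support, (x ∈ A ↔ u ∈ A) := by
    intro u v w
    induction w with
    | nil => intro x hx; simp at hx; subst hx; exact Iff.rfl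
    | cons h p ih =>
      intro x hx
      rw [SimpleGraph.Walk.support_cons, List.mem_cons] at hx
      rcases hx with rfl | hx
      · exact Iff.rfl
      · exact (ih x hx).trans ((hG _ _).1 h).2.symm
  have hmem : ∀ (v : Fin n) (w : G.Walk v v), ∀ e ∈ w.edges, ∀ x ∈ e, (x ∈ A ↔ v ∈ A) := by
    intro v w e he x hx
    induction e with
    | h a b =>
      rcases Sym2.mem_iff.1 hx with rfl | rfl
      · exact key v v w x (w.fst_mem_support_of_mem_edges he)
      · exact key v v w x (w.snd_mem_support_of_mem_edges he)
  have rainbow : ∀ (v : Fin n) (w : G.Walk v v), w.IsCycle → (w.edges.map χ).Nodup := by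
    intro v w hw
    refine List.Nodup.map_on ?_ hw.edges_nodup
    intro e₁ he₁ e₂ he₂ hχ
    have hE₁ := w.edges_subset_edgeSet he₁
    have hE₂ := w.edges_subset_edgeSet he₂
    by_cases hv : v ∈ A
    · exact hA e₁ hE₁ e₂ hE₂ (fun x hx => (hmem v w e₁ he₁ x hx).2 hv)
        (fun x hx => (hmem v w e₂ he₂ x hx).2 hv) hχ
    · exact hB e₁ hE₁ e₂ hE₂ (fun x hx h => hv ((hmem v w e₁ he₁ x hx).1 h))
        (fun x hx h => hv ((hmem v w e₂ he₂ x hx).1 h)) hχ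
  refine ⟨rainbow, ?_⟩
  intro e k _hk he
  apply Nat.sInf_le
  -- the image of the coloring is finite, so inject it into ℕ
  set S : Set C := χ '' G.edgeSet with hS
  have hSfin : S.Finite := (Set.toFinite _).image χ
  haveI : Countable ↥S := hSfin.countable.to_subtype
  obtain ⟨f, hf⟩ := exists_injective_nat ↥S
  set g : C → ℕ := fun c => if h : c ∈ S then f ⟨c, h⟩ else 0 with hg
  have hgInj : ∀ c₁ ∈ S, ∀ c₂ ∈ S, g c₁ = g c₂ → c₁ = c₂ := by
    intro c₁ h₁ c₂ h₂ h
    rw [hg] at h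
    simp only [h₁, h₂, dif_pos] at h
    exact Subtype.ext_iff.1 (hf h)
  refine ⟨G, ?_, fun e' => g (χ e'), ?_, ?_⟩
  · -- enough edges
    have := aux_card_edges A G hG
    rw [Nat.choose_two_right] at this
    omega
  · -- few colors
    -- every color appears on an edge inside A
    have hEA : S = χ '' {e' | e' ∈ G.edgeSet ∧ ∀ x ∈ e', x ∈ A} := by
      apply Set.Subset.antisymm
      · rintro c ⟨e', he', rfl⟩
        have hne : (∀ x ∈ e', x ∈ A) ∨ (∀ x ∈ e', x ∉ A) := by
          clear hBA hA hB
          induction e' with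
          | h a b =>
            have hab := (hG a b).1 he'
            by_cases ha : a ∈ A
            · left; intro x hx
              rcases Sym2.mem_iff.1 hx with rfl | rfl
              · exact ha
              · exact hab.2.1 ha
            · right; intro x hx h
              rcases Sym2.mem_iff.1 hx with rfl | rfl
              · exact ha h
              · exact ha (hab.2.2 h)
        rcases hne with h | h
        · exact ⟨e', ⟨he', h⟩, rfl⟩
        · obtain ⟨e₁, he₁, hA₁, hc⟩ := hBA e' he' h
          exact ⟨e₁, ⟨he₁, hA₁⟩, hc⟩
      · exact Set.image_mono (f := χ) (fun x hx => hx.1)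
    have h1 : ((fun e' => g (χ e')) '' G.edgeSet) = g '' S := by
      rw [hS, Set.image_image]
    have h2 : (g '' S).ncard ≤ S.ncard := Set.ncard_image_le hSfin
    have h3 : S.ncard ≤ ({e' | e' ∈ G.edgeSet ∧ ∀ x ∈ e', x ∈ A} : Set (Sym2 (Fin n))).ncard := by
      rw [hEA]; exact Set.ncard_image_le (Set.Finite.subset (Set.toFinite G.edgeSet)
        (fun x hx => hx.1))
    have h4 : ({e' | e' ∈ G.edgeSet ∧ ∀ x ∈ e', x ∈ A} : Set (Sym2 (Fin n))).ncard
        ≤ A.card.choose 2 := by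
      rw [← aux_card_sym2 A, ← Set.ncard_coe_finset]
      refine Set.ncard_le_ncard ?_ (Set.toFinite _)
      rintro e' ⟨he', hA'⟩
      simp only [Finset.coe_filter, Set.mem_setOf_eq, Finset.mem_sym2_iff]
      exact ⟨hA', G.not_isDiag_of_mem_edgeSet he'⟩
    rw [h1, ← Nat.choose_two_right]
    omega
  · -- rainbow cycles
    intro v w hw _
    have := rainbow v w hw
    have hmap : w.edges.map (fun e' => g (χ e')) = (w.edges.map χ).map g := by
      rw [List.map_map]; rfl
    rw [hmap]
    refine List.Nodup.map_on ?_ this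
    intro c₁ h₁ c₂ h₂ h
    have hc₁ : c₁ ∈ S := by
      obtain ⟨e₁, he₁, rfl⟩ := List.mem_map.1 h₁
      exact ⟨e₁, w.edges_subset_edgeSet he₁, rfl⟩
    have hc₂ : c₂ ∈ S := by
      obtain ⟨e₂, he₂, rfl⟩ := List.mem_map.1 h₂
      exact ⟨e₂, w.edges_subset_edgeSet he₂, rfl⟩
    exact hgInj c₁ hc₁ c₂ hc₂ h
end

section
/- Let G be a simple graph with n vertices and e edges, where e > n²/4. Then G contains two adjacent vertices p and q with more than n/6 common neighbors. -/
open SimpleGraph Finset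

namespace Statement8Aux

variable {V : Type} [Fintype V] [DecidableEq V] (G : SimpleGraph V) [DecidableRel G.Adj]

/-- codegree of a pair of vertices -/
abbrev cd (u v : V) : ℕ := #(G.neighborFinset u ∩ G.neighborFinset v)

/-- predicate: ordered triple is a triangle -/
abbrev adjT (t : V × V × V) : Prop :=
  G.Adj t.1 t.2.1 ∧ G.Adj t.1 t.2.2 ∧ G.Adj t.2.1 t.2.2

lemma nf_filter (u : V) :
    G.neighborFinset u = Finset.univ.filter (fun v => G.Adj u v) := by
  ext w; simp

lemma sum_nf (u : V) (h : V → ℕ) :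
    ∑ v ∈ G.neighborFinset u, h v = ∑ v : V, if G.Adj u v then h v else 0 := by
  rw [nf_filter G u, Finset.sum_filter]

lemma sum_nf_inter (u v : V) (h : V → ℕ) :
    ∑ w ∈ G.neighborFinset u ∩ G.neighborFinset v, h w
      = ∑ w : V, if G.Adj u w ∧ G.Adj v w then h w else 0 := by
  have hset : G.neighborFinset u ∩ G.neighborFinset v
      = Finset.univ.filter (fun w => G.Adj u w ∧ G.Adj v w) := by
    ext w; simp
  rw [hset, Finset.sum_filter]

/-- bridge between triple sums with an `if` guard and nested neighborhood sums -/
lemma triple_sum_eq (g : V → V → V → ℕ) :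
    (∑ t : V × V × V, if adjT G t then g t.1 t.2.1 t.2.2 else 0)
      = ∑ u : V, ∑ v ∈ G.neighborFinset u,
          ∑ w ∈ G.neighborFinset u ∩ G.neighborFinset v, g u v w := by
  rw [Fintype.sum_prod_type]
  refine Finset.sum_congr rfl fun u _ => ?_
  rw [Fintype.sum_prod_type, sum_nf G u]
  refine Finset.sum_congr rfl fun v _ => ?_
  by_cases huv : G.Adj u v
  · rw [if_pos huv, sum_nf_inter G u v]
    refine Finset.sum_congr rfl fun w _ => ?_
    show (if adjT G (u, v, w) then g u v w else 0) = _
    by_cases h2 : G.Adj u w ∧ G.Adj v w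
    · rw [if_pos h2, if_pos (show adjT G (u, v, w) from ⟨huv, h2.1, h2.2⟩)]
    · rw [if_neg h2, if_neg (show ¬ adjT G (u, v, w) from fun hc => h2 ⟨hc.2.1, hc.2.2⟩)]
  · rw [if_neg huv]
    refine Finset.sum_eq_zero fun w _ => ?_
    show (if adjT G (u, v, w) then g u v w else 0) = 0
    exact if_neg (fun hc => huv hc.1)

/-- reindexing a guarded triple sum along a triangle-preserving equivalence -/
lemma reindex (e : (V × V × V) ≃ (V × V × V))
    (he : ∀ t, adjT G (e t) ↔ adjT G t) (f : (V × V × V) → ℕ) :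
    (∑ t : V × V × V, if adjT G t then f (e t) else 0)
      = ∑ t : V × V × V, if adjT G t then f t else 0 := by
  refine (Finset.sum_congr rfl fun t _ => ?_).trans
    (Equiv.sum_comp e (fun s => if adjT G s then f s else 0))
  show (if adjT G t then f (e t) else 0) = (if adjT G (e t) then f (e t) else 0)
  exact if_congr (he t).symm rfl rfl

/-- pointwise triangle bound via inclusion-exclusion -/
lemma deg_triple_le (u v w : V) :
    G.degree u + G.degree v + G.degree w
      ≤ Fintype.card V + cd G u v + cd G u w + cd G v w := by
  have h1 : #(G.neighborFinset u ∪ G.neighborFinset v)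
      + #(G.neighborFinset u ∩ G.neighborFinset v)
      = #(G.neighborFinset u) + #(G.neighborFinset v) :=
    Finset.card_union_add_card_inter _ _
  have h2 : #(G.neighborFinset u ∪ G.neighborFinset v ∪ G.neighborFinset w)
      + #((G.neighborFinset u ∪ G.neighborFinset v) ∩ G.neighborFinset w)
      = #(G.neighborFinset u ∪ G.neighborFinset v) + #(G.neighborFinset w) :=
    Finset.card_union_add_card_inter _ _
  have h3 : (G.neighborFinset u ∪ G.neighborFinset v) ∩ G.neighborFinset w
      = (G.neighborFinset u ∩ G.neighborFinset w) ∪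
        (G.neighborFinset v ∩ G.neighborFinset w) :=
    Finset.union_inter_distrib_right _ _ _
  have h4 : #((G.neighborFinset u ∩ G.neighborFinset w) ∪
        (G.neighborFinset v ∩ G.neighborFinset w))
      ≤ #(G.neighborFinset u ∩ G.neighborFinset w)
        + #(G.neighborFinset v ∩ G.neighborFinset w) :=
    Finset.card_union_le _ _
  have h5 : #(G.neighborFinset u ∪ G.neighborFinset v ∪ G.neighborFinset w)
      ≤ Fintype.card V := by
    simpa using Finset.card_le_univ
      (G.neighborFinset u ∪ G.neighborFinset v ∪ G.neighborFinset w)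
  have hdu : G.degree u = #(G.neighborFinset u) := (G.card_neighborFinset_eq_degree u).symm
  have hdv : G.degree v = #(G.neighborFinset v) := (G.card_neighborFinset_eq_degree v).symm
  have hdw : G.degree w = #(G.neighborFinset w) := (G.card_neighborFinset_eq_degree w).symm
  rw [h3] at h2
  show G.degree u + G.degree v + G.degree w ≤ Fintype.card V
      + #(G.neighborFinset u ∩ G.neighborFinset v)
      + #(G.neighborFinset u ∩ G.neighborFinset w)
      + #(G.neighborFinset v ∩ G.neighborFinset w)
  omega

/-- pairwise bound -/
lemma deg_pair_le (u v : V) :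
    G.degree u + G.degree v ≤ Fintype.card V + cd G u v := by
  have h1 : #(G.neighborFinset u ∪ G.neighborFinset v)
      + #(G.neighborFinset u ∩ G.neighborFinset v)
      = #(G.neighborFinset u) + #(G.neighborFinset v) :=
    Finset.card_union_add_card_inter _ _
  have h5 : #(G.neighborFinset u ∪ G.neighborFinset v) ≤ Fintype.card V := by
    simpa using Finset.card_le_univ (G.neighborFinset u ∪ G.neighborFinset v)
  have hdu : G.degree u = #(G.neighborFinset u) := (G.card_neighborFinset_eq_degree u).symm
  have hdv : G.degree v = #(G.neighborFinset v) := (G.card_neighborFinset_eq_degree v).symm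
  show G.degree u + G.degree v ≤ Fintype.card V
      + #(G.neighborFinset u ∩ G.neighborFinset v)
  omega

/-- aggregated triangle inequality -/
lemma triangle_aggregate :
    3 * (∑ u : V, ∑ v ∈ G.neighborFinset u, cd G u v * (G.degree u + G.degree v))
      ≤ 2 * Fintype.card V * (∑ u : V, ∑ v ∈ G.neighborFinset u, cd G u v)
        + 6 * (∑ u : V, ∑ v ∈ G.neighborFinset u, (cd G u v)^2) := by
  -- reindexing identities
  have R1 : (∑ t : V × V × V, if adjT G t then G.degree t.1 else 0)
      = ∑ t : V × V × V, if adjT G t then G.degree t.2.2 else 0 := by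
    have h := reindex G
      ⟨fun t => (t.2.2, t.2.1, t.1), fun t => (t.2.2, t.2.1, t.1),
        fun t => rfl, fun t => rfl⟩
      (by rintro ⟨u, v, w⟩
          exact ⟨fun ⟨h1, h2, h3⟩ => ⟨h3.symm, h2.symm, h1.symm⟩,
            fun ⟨h1, h2, h3⟩ => ⟨h3.symm, h2.symm, h1.symm⟩⟩)
      (fun t => G.degree t.2.2)
    simpa using h
  have R2 : (∑ t : V × V × V, if adjT G t then G.degree t.2.1 else 0)
      = ∑ t : V × V × V, if adjT G t then G.degree t.2.2 else 0 := by
    have h := reindex G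
      ⟨fun t => (t.1, t.2.2, t.2.1), fun t => (t.1, t.2.2, t.2.1),
        fun t => rfl, fun t => rfl⟩
      (by rintro ⟨u, v, w⟩
          exact ⟨fun ⟨h1, h2, h3⟩ => ⟨h2, h1, h3.symm⟩,
            fun ⟨h1, h2, h3⟩ => ⟨h2, h1, h3.symm⟩⟩)
      (fun t => G.degree t.2.1)
    simpa using h.symm
  have R3 : (∑ t : V × V × V, if adjT G t then cd G t.1 t.2.2 else 0)
      = ∑ t : V × V × V, if adjT G t then cd G t.1 t.2.1 else 0 := by
    have h := reindex G
      ⟨fun t => (t.1, t.2.2, t.2.1), fun t => (t.1, t.2.2, t.2.1),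
        fun t => rfl, fun t => rfl⟩
      (by rintro ⟨u, v, w⟩
          exact ⟨fun ⟨h1, h2, h3⟩ => ⟨h2, h1, h3.symm⟩,
            fun ⟨h1, h2, h3⟩ => ⟨h2, h1, h3.symm⟩⟩)
      (fun t => cd G t.1 t.2.1)
    simpa using h
  have R4 : (∑ t : V × V × V, if adjT G t then cd G t.2.1 t.2.2 else 0)
      = ∑ t : V × V × V, if adjT G t then cd G t.1 t.2.1 else 0 := by
    have h := reindex G
      ⟨fun t => (t.2.1, t.2.2, t.1), fun t => (t.2.2, t.1, t.2.1),
        fun t => rfl, fun t => rfl⟩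
      (by rintro ⟨u, v, w⟩
          exact ⟨fun ⟨h1, h2, h3⟩ => ⟨h2.symm, h3.symm, h1⟩,
            fun ⟨h1, h2, h3⟩ => ⟨h3, h1.symm, h2.symm⟩⟩)
      (fun t => cd G t.1 t.2.1)
    simpa using h
  -- sum splitting
  have hLsplit : (∑ t : V × V × V,
        if adjT G t then G.degree t.1 + G.degree t.2.1 + G.degree t.2.2 else 0)
      = (∑ t : V × V × V, if adjT G t then G.degree t.1 else 0)
        + (∑ t : V × V × V, if adjT G t then G.degree t.2.1 else 0)
        + ∑ t : V × V × V, if adjT G t then G.degree t.2.2 else 0 := by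
    rw [← Finset.sum_add_distrib, ← Finset.sum_add_distrib]
    refine Finset.sum_congr rfl fun t _ => ?_
    by_cases h : adjT G t
    · simp [if_pos h]
    · simp [if_neg h]
  have hRsplit : (∑ t : V × V × V,
        if adjT G t then Fintype.card V + cd G t.1 t.2.1 + cd G t.1 t.2.2
          + cd G t.2.1 t.2.2 else 0)
      = (∑ t : V × V × V, if adjT G t then Fintype.card V else 0)
        + (∑ t : V × V × V, if adjT G t then cd G t.1 t.2.1 else 0)
        + (∑ t : V × V × V, if adjT G t then cd G t.1 t.2.2 else 0)
        + ∑ t : V × V × V, if adjT G t then cd G t.2.1 t.2.2 else 0 := by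
    rw [← Finset.sum_add_distrib, ← Finset.sum_add_distrib, ← Finset.sum_add_distrib]
    refine Finset.sum_congr rfl fun t _ => ?_
    by_cases h : adjT G t
    · simp [if_pos h]
    · simp [if_neg h]
  have hSkssplit : (∑ t : V × V × V,
        if adjT G t then G.degree t.1 + G.degree t.2.1 else 0)
      = (∑ t : V × V × V, if adjT G t then G.degree t.1 else 0)
        + ∑ t : V × V × V, if adjT G t then G.degree t.2.1 else 0 := by
    rw [← Finset.sum_add_distrib]
    refine Finset.sum_congr rfl fun t _ => ?_
    by_cases h : adjT G t
    · simp [if_pos h]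
    · simp [if_neg h]
  have hconst : (∑ t : V × V × V, if adjT G t then Fintype.card V else 0)
      = Fintype.card V * ∑ t : V × V × V, if adjT G t then 1 else 0 := by
    rw [Finset.mul_sum]
    refine Finset.sum_congr rfl fun t _ => ?_
    by_cases h : adjT G t
    · simp [if_pos h]
    · simp [if_neg h]
  -- identifications with double sums
  have hSk : (∑ t : V × V × V, if adjT G t then 1 else 0)
      = ∑ u : V, ∑ v ∈ G.neighborFinset u, cd G u v := by
    rw [triple_sum_eq G (fun _ _ _ => 1)]
    refine Finset.sum_congr rfl fun u _ => Finset.sum_congr rfl fun v _ => ?_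
    rw [Finset.sum_const, smul_eq_mul, mul_one]
  have hSk2 : (∑ t : V × V × V, if adjT G t then cd G t.1 t.2.1 else 0)
      = ∑ u : V, ∑ v ∈ G.neighborFinset u, (cd G u v)^2 := by
    rw [triple_sum_eq G (fun u v _ => cd G u v)]
    refine Finset.sum_congr rfl fun u _ => Finset.sum_congr rfl fun v _ => ?_
    rw [Finset.sum_const, smul_eq_mul, sq]
  have hSks : (∑ t : V × V × V,
        if adjT G t then G.degree t.1 + G.degree t.2.1 else 0)
      = ∑ u : V, ∑ v ∈ G.neighborFinset u, cd G u v * (G.degree u + G.degree v) := by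
    rw [triple_sum_eq G (fun u v _ => G.degree u + G.degree v)]
    refine Finset.sum_congr rfl fun u _ => Finset.sum_congr rfl fun v _ => ?_
    rw [Finset.sum_const, smul_eq_mul]
  -- master inequality
  have hmaster : (∑ t : V × V × V,
        if adjT G t then G.degree t.1 + G.degree t.2.1 + G.degree t.2.2 else 0)
      ≤ ∑ t : V × V × V,
        if adjT G t then Fintype.card V + cd G t.1 t.2.1 + cd G t.1 t.2.2
          + cd G t.2.1 t.2.2 else 0 := by
    refine Finset.sum_le_sum fun t _ => ?_
    by_cases h : adjT G t
    · rw [if_pos h, if_pos h]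
      exact deg_triple_le G t.1 t.2.1 t.2.2
    · rw [if_neg h, if_neg h]
  rw [hLsplit, hRsplit, R1, R2, hconst, hSk, hSk2, R3, R4, hSk2] at hmaster
  have hSks2 : (∑ u : V, ∑ v ∈ G.neighborFinset u, cd G u v * (G.degree u + G.degree v))
      = (∑ t : V × V × V, if adjT G t then G.degree t.2.2 else 0)
        + ∑ t : V × V × V, if adjT G t then G.degree t.2.2 else 0 := by
    rw [← hSks, hSkssplit, R1, R2]
  rw [hSks2]
  linarith [hmaster]

end Statement8Aux

open Statement8Aux

/-- Let `G` be a simple graph with `n` vertices and `e > n²/4` edges. Then `G` contains two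
adjacent vertices `p` and `q` with more than `n/6` common neighbors. -/
theorem statement8 {V : Type} [Fintype V] (G : SimpleGraph V) (n e : ℕ)
    (hn : Fintype.card V = n) (he : G.edgeSet.ncard = e) (he' : (n : ℝ) ^ 2 / 4 < (e : ℝ)) :
    ∃ p q : V, G.Adj p q ∧ (n : ℝ) / 6 < ((G.neighborSet p ∩ G.neighborSet q).ncard : ℝ) := by
  classical
  letI : DecidableEq V := Classical.decEq V
  letI : DecidableRel G.Adj := fun a b => Classical.propDecidable _
  by_contra hcon
  push_neg at hcon
  -- edge count as a Finset card
  have hedge : e = #G.edgeFinset := by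
    rw [← he, ← SimpleGraph.coe_edgeFinset, Set.ncard_coe_finset]
  set m := #G.edgeFinset with hm
  -- numeric form of the density hypothesis
  have hm4 : n ^ 2 < 4 * m := by
    have h1 : (n : ℝ) ^ 2 < 4 * (e : ℝ) := by linarith
    have h2 : ((n ^ 2 : ℕ) : ℝ) < ((4 * e : ℕ) : ℝ) := by push_cast; linarith
    have h3 : n ^ 2 < 4 * e := by exact_mod_cast h2
    rwa [hedge] at h3
  -- ncard to cd conversion
  have hncard : ∀ u v : V,
      (G.neighborSet u ∩ G.neighborSet v).ncard = cd G u v := by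
    intro u v
    show _ = #(G.neighborFinset u ∩ G.neighborFinset v)
    rw [← Set.ncard_coe_finset (G.neighborFinset u ∩ G.neighborFinset v)]
    congr 1
    rw [Finset.coe_inter]
    simp [SimpleGraph.neighborFinset_def, Set.coe_toFinset]
  -- key codegree bound from the contradiction hypothesis
  have hkey : ∀ u v : V, G.Adj u v → 6 * cd G u v ≤ n := by
    intro u v huv
    have h := hcon u v huv
    rw [hncard u v] at h
    have h6 : ((6 * cd G u v : ℕ) : ℝ) ≤ (n : ℝ) := by push_cast; linarith
    exact_mod_cast h6
  have hcard : Fintype.card V = n := hn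
  -- pointwise polynomial inequality on adjacent pairs
  have hpt : ∀ u : V, ∀ v ∈ G.neighborFinset u,
      n * (G.degree u + G.degree v) + 4 * n * cd G u v + 12 * (cd G u v)^2
        ≤ n ^ 2 + 6 * (cd G u v * (G.degree u + G.degree v)) := by
    intro u v hv
    have hadj : G.Adj u v := by simpa using hv
    have h6 : 6 * cd G u v ≤ n := hkey u v hadj
    have hs : G.degree u + G.degree v ≤ n + cd G u v := by
      have h := deg_pair_le G u v
      rwa [hcard] at h
    have h6' : (6 : ℤ) * (cd G u v : ℤ) ≤ (n : ℤ) := by exact_mod_cast h6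
    have hs' : ((G.degree u : ℤ) + (G.degree v : ℤ)) ≤ (n : ℤ) + (cd G u v : ℤ) := by
      exact_mod_cast hs
    have goal' : (n : ℤ) * ((G.degree u : ℤ) + (G.degree v : ℤ))
        + 4 * (n : ℤ) * (cd G u v : ℤ) + 12 * (cd G u v : ℤ)^2
        ≤ (n : ℤ) ^ 2 + 6 * ((cd G u v : ℤ) * ((G.degree u : ℤ) + (G.degree v : ℤ))) := by
      nlinarith [mul_nonneg (by linarith : (0:ℤ) ≤ (n : ℤ) - 6 * (cd G u v : ℤ))
        (by linarith : (0:ℤ) ≤ (n : ℤ) + 2 * (cd G u v : ℤ)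
          - ((G.degree u : ℤ) + (G.degree v : ℤ)))]
    exact_mod_cast goal'
  -- summed pointwise inequality
  have hCraw : (∑ u : V, ∑ v ∈ G.neighborFinset u,
        (n * (G.degree u + G.degree v) + 4 * n * cd G u v + 12 * (cd G u v)^2))
      ≤ ∑ u : V, ∑ v ∈ G.neighborFinset u,
        (n ^ 2 + 6 * (cd G u v * (G.degree u + G.degree v))) :=
    Finset.sum_le_sum fun u _ => Finset.sum_le_sum fun v hv => hpt u v hv
  -- distribute sums on the left
  have hL : (∑ u : V, ∑ v ∈ G.neighborFinset u,
        (n * (G.degree u + G.degree v) + 4 * n * cd G u v + 12 * (cd G u v)^2))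
      = n * (∑ u : V, ∑ v ∈ G.neighborFinset u, (G.degree u + G.degree v))
        + 4 * n * (∑ u : V, ∑ v ∈ G.neighborFinset u, cd G u v)
        + 12 * (∑ u : V, ∑ v ∈ G.neighborFinset u, (cd G u v)^2) := by
    have hu : ∀ u : V, (∑ v ∈ G.neighborFinset u,
        (n * (G.degree u + G.degree v) + 4 * n * cd G u v + 12 * (cd G u v)^2))
        = n * (∑ v ∈ G.neighborFinset u, (G.degree u + G.degree v))
          + 4 * n * (∑ v ∈ G.neighborFinset u, cd G u v)
          + 12 * (∑ v ∈ G.neighborFinset u, (cd G u v)^2) := by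
      intro u
      rw [Finset.mul_sum, Finset.mul_sum, Finset.mul_sum,
        ← Finset.sum_add_distrib, ← Finset.sum_add_distrib]
    rw [Finset.sum_congr rfl fun u _ => hu u]
    rw [Finset.sum_add_distrib, Finset.sum_add_distrib,
      ← Finset.mul_sum, ← Finset.mul_sum, ← Finset.mul_sum]
  -- distribute sums on the right
  have hdegsum : ∑ v : V, G.degree v = 2 * m := G.sum_degrees_eq_twice_card_edges
  have hRr : (∑ u : V, ∑ v ∈ G.neighborFinset u,
        (n ^ 2 + 6 * (cd G u v * (G.degree u + G.degree v))))
      = 2 * m * n ^ 2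
        + 6 * (∑ u : V, ∑ v ∈ G.neighborFinset u,
            cd G u v * (G.degree u + G.degree v)) := by
    have hu : ∀ u : V, (∑ v ∈ G.neighborFinset u,
        (n ^ 2 + 6 * (cd G u v * (G.degree u + G.degree v))))
        = G.degree u * n ^ 2
          + 6 * ∑ v ∈ G.neighborFinset u, cd G u v * (G.degree u + G.degree v) := by
      intro u
      rw [Finset.sum_add_distrib, Finset.sum_const, G.card_neighborFinset_eq_degree,
        smul_eq_mul, ← Finset.mul_sum]
    rw [Finset.sum_congr rfl fun u _ => hu u, Finset.sum_add_distrib,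
      ← Finset.sum_mul, hdegsum, ← Finset.mul_sum]
  -- the triangle aggregate
  have hD := triangle_aggregate G
  rw [hcard] at hD
  -- degree-square sum identity
  have hB : (∑ u : V, ∑ v ∈ G.neighborFinset u, (G.degree u + G.degree v))
      = 2 * ∑ v : V, (G.degree v)^2 := by
    have hsplit : ∀ u : V, (∑ v ∈ G.neighborFinset u, (G.degree u + G.degree v))
        = (∑ _v ∈ G.neighborFinset u, G.degree u)
          + ∑ v ∈ G.neighborFinset u, G.degree v := fun u => Finset.sum_add_distrib
    rw [Finset.sum_congr rfl fun u _ => hsplit u, Finset.sum_add_distrib]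
    have h1 : (∑ u : V, ∑ _v ∈ G.neighborFinset u, G.degree u)
        = ∑ u : V, (G.degree u)^2 := by
      refine Finset.sum_congr rfl fun u _ => ?_
      rw [Finset.sum_const, G.card_neighborFinset_eq_degree, smul_eq_mul, sq]
    have h2 : (∑ u : V, ∑ v ∈ G.neighborFinset u, G.degree v)
        = ∑ v : V, (G.degree v)^2 := by
      have hstep : ∀ u : V, (∑ v ∈ G.neighborFinset u, G.degree v)
          = ∑ v : V, if G.Adj u v then G.degree v else 0 := fun u => sum_nf G u _
      rw [Finset.sum_congr rfl fun u _ => hstep u, Finset.sum_comm]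
      refine Finset.sum_congr rfl fun v _ => ?_
      rw [← Finset.sum_filter, Finset.sum_const]
      have hfilter : (Finset.univ.filter fun u => G.Adj u v) = G.neighborFinset v := by
        ext x
        simp only [Finset.mem_filter, Finset.mem_univ, true_and,
          SimpleGraph.mem_neighborFinset]
        exact ⟨fun h => h.symm, fun h => h.symm⟩
      rw [hfilter, G.card_neighborFinset_eq_degree, smul_eq_mul, sq]
    rw [h1, h2]
    exact (two_mul _).symm
  -- combine everything
  rw [hL, hRr] at hCraw
  have hfinal : n * (∑ u : V, ∑ v ∈ G.neighborFinset u, (G.degree u + G.degree v))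
      ≤ 2 * m * n ^ 2 := by
    linarith [hCraw, hD]
  rw [hB] at hfinal
  -- Cauchy-Schwarz
  have hCS : (∑ v : V, G.degree v) ^ 2 ≤ n * ∑ v : V, (G.degree v)^2 := by
    have h := sq_sum_le_card_mul_sum_sq (s := (Finset.univ : Finset V))
      (f := fun v => (G.degree v : ℕ))
    rwa [Finset.card_univ, hcard] at h
  rw [hdegsum] at hCS
  -- conclude 4 m ≤ n²
  have hmpos : 0 < m := by
    rcases Nat.eq_zero_or_pos m with h0 | h
    · rw [h0] at hm4
      simp at hm4
    · exact h
  have h4m : 4 * m ^ 2 ≤ m * n ^ 2 := by nlinarith [hCS, hfinal]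
  have h4m' : m * (4 * m) ≤ m * n ^ 2 := by nlinarith [h4m]
  have hfin : 4 * m ≤ n ^ 2 := Nat.le_of_mul_le_mul_left h4m' hmpos
  exact absurd hm4 (not_lt.mpr hfin)
end

section
/- Let k ≥ 4 be an integer and let G be a simple graph on m vertices whose minimum degree is at least m/2 + 5k. Then any two distinct edges of G lie on a common cycle of length 2k+1. -/
open SimpleGraph


lemma walk_of_chain {V : Type} (G : SimpleGraph V) :
    ∀ (l : List V) (x y : V), List.Chain G.Adj x (l ++ [y]) →
    ∃ w : G.Walk x y, w.support = x :: (l ++ [y]) ∧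
      w.edges = List.zipWith (fun u v => s(u,v)) (x :: l) (l ++ [y]) := by
  intro l
  induction l with
  | nil =>
    intro x y h
    rcases List.chain_cons.mp h with ⟨hxy, -⟩
    exact ⟨Walk.cons hxy Walk.nil, by simp, by simp⟩
  | cons z l ih =>
    intro x y h
    rcases List.chain_cons.mp h with ⟨hxz, htail⟩
    obtain ⟨w, hs, he⟩ := ih z y htail
    exact ⟨Walk.cons hxz w, by simp [hs], by simp [he]⟩

lemma zip_append {V : Type} (G : SimpleGraph V) (t a : V) :
    ∀ (l : List V) (x : V),
    List.zipWith (fun u v => s(u,v)) (x :: (l ++ [t])) ((l ++ [t]) ++ [a]) =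
      List.zipWith (fun u v => s(u,v)) (x :: l) (l ++ [t]) ++ [s(t,a)] := by
  intro l
  induction l with
  | nil => intro x; simp
  | cons z l ih =>
    intro x
    have h := ih z
    simp only [List.append_assoc, List.singleton_append] at h
    simp [h]

lemma cycle_of_chain {V : Type} (G : SimpleGraph V) (a b : V) (mid : List V)
    (hmid : mid ≠ []) (hab : G.Adj a b)
    (hch : List.Chain G.Adj b (mid ++ [a]))
    (hnd : (a :: b :: mid).Nodup) :
    ∃ w : G.Walk a a, w.IsCycle ∧ w.length = mid.length + 2 ∧
      w.edges = s(a,b) :: List.zipWith (fun u v => s(u,v)) (b :: mid) (mid ++ [a]) := by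
  rcases (List.eq_nil_or_concat mid) with h | ⟨mid₀, t, rfl⟩
  · exact absurd h hmid
  simp only [List.concat_eq_append] at hnd hmid hch ⊢
  -- split the chain
  have hch' : List.Chain G.Adj b (mid₀ ++ t :: [a]) := by
    simpa [List.append_assoc] using hch
  rw [List.Chain, List.isChain_cons_split] at hch'
  obtain ⟨h1, h2⟩ := hch'
  have hta : G.Adj t a := (List.chain_cons.mp h2).1
  obtain ⟨P', hPs, hPe⟩ := walk_of_chain G mid₀ b t h1
  -- facts from nodup
  have hand : a ∉ b :: (mid₀ ++ [t]) := (List.nodup_cons.mp hnd).1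
  have hbnd : b ∉ mid₀ ++ [t] := (List.nodup_cons.mp (List.nodup_cons.mp hnd).2).1
  have hnd2 : (b :: (mid₀ ++ [t])).Nodup := (List.nodup_cons.mp hnd).2
  have htmem : t ∈ mid₀ ++ [t] := by simp
  set P : G.Walk b a := P'.concat hta with hP
  have hPsupp : P.support = (b :: (mid₀ ++ [t])) ++ [a] := by
    rw [hP, Walk.support_concat, hPs]
  have hPedges : P.edges = List.zipWith (fun u v => s(u,v)) (b :: mid₀) (mid₀ ++ [t]) ++ [s(t,a)] := by
    rw [hP, Walk.edges_concat, hPe]; simp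
  have hpath : P.IsPath := by
    apply Walk.IsPath.mk'
    rw [hPsupp, List.nodup_append]
    refine ⟨hnd2, by simp, ?_⟩
    intro x hx y hy
    simp only [List.mem_singleton] at hy
    subst hy
    exact fun h => hand (h ▸ hx)
  have hnotmem : s(a, b) ∉ P.edges := by
    rw [hPedges]
    intro hmem
    rcases List.mem_append.mp hmem with hmem | hmem
    · have ha : a ∈ P'.support := P'.fst_mem_support_of_mem_edges (by rw [hPe]; exact hmem)
      rw [hPs] at ha
      exact hand ha
    · simp at hmem
      rcases hmem with ⟨rfl, rfl⟩ | ⟨-, rfl⟩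
      · exact hand (List.mem_cons_of_mem _ htmem)
      · exact hbnd htmem
  refine ⟨Walk.cons hab P, ?_, ?_, ?_⟩
  · exact (Walk.cons_isCycle_iff P hab).mpr ⟨hpath, hnotmem⟩
  · have : P.support.length = P.length + 1 := by
      rw [Walk.length_support]
    rw [hPsupp] at this
    simp at this
    simp [Walk.length_cons]
    omega
  · rw [Walk.edges_cons, hPedges, ← zip_append G t a mid₀ b]

lemma exists_chain {V : Type} [Fintype V] [DecidableEq V] (G : SimpleGraph V) [DecidableRel G.Adj] (k : ℕ)
    (hk1 : 1 ≤ k)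
    (hdeg : ∀ v : V, 10 * k + 1 ≤ G.degree v)
    (hcodeg : ∀ u v : V, 10 * k ≤ (G.neighborFinset u ∩ G.neighborFinset v).card) :
    ∀ ℓ : ℕ, 2 ≤ ℓ → ∀ (x y : V) (F : Finset V), x ≠ y → F.card + ℓ ≤ 2 * k + 1 →
    ∃ l : List V, l.length = ℓ - 1 ∧ List.Chain G.Adj x (l ++ [y]) ∧
      (x :: (l ++ [y])).Nodup ∧ ∀ v ∈ l, v ∉ F := by
  intro ℓ hℓ2
  induction ℓ, hℓ2 using Nat.le_induction with
  | base =>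
    intro x y F hxy hF
    -- pick a common neighbor of x and y avoiding F ∪ {x,y}
    have hcard : 0 < ((G.neighborFinset x ∩ G.neighborFinset y) \ (F ∪ {x, y})).card := by
      have h1 := hcodeg x y
      have h2 : (F ∪ {x, y}).card ≤ F.card + 2 := by
        calc (F ∪ {x, y}).card ≤ F.card + ({x, y} : Finset V).card := Finset.card_union_le _ _
        _ ≤ F.card + 2 := by
            have : ({x, y} : Finset V).card ≤ 2 := Finset.card_le_two
            omega
      have h3 := Finset.le_card_sdiff (F ∪ {x, y}) (G.neighborFinset x ∩ G.neighborFinset y)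
      omega
    obtain ⟨z, hz⟩ := Finset.card_pos.mp hcard
    simp only [Finset.mem_sdiff, Finset.mem_inter, mem_neighborFinset, Finset.mem_union,
      Finset.mem_insert, Finset.mem_singleton, not_or] at hz
    obtain ⟨⟨hxz, hyz⟩, hzF, hzx, hzy⟩ := hz
    refine ⟨[z], rfl, ?_, ?_, ?_⟩
    · exact List.chain_cons.mpr ⟨hxz, List.chain_cons.mpr ⟨hyz.symm, List.Chain.nil⟩⟩
    · have h1 : x ≠ z := fun h => hzx h.symm
      simp [hxy, h1, hzy]
    · intro v hv; simp at hv; subst hv; exact hzF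
  | succ ℓ hℓ ih =>
    intro x y F hxy hF
    -- pick a neighbor z of x avoiding F ∪ {x, y}
    have hcard : 0 < ((G.neighborFinset x) \ (F ∪ {x, y})).card := by
      have h1 := hdeg x
      rw [← card_neighborFinset_eq_degree] at h1
      have h2 : (F ∪ {x, y}).card ≤ F.card + 2 := by
        calc (F ∪ {x, y}).card ≤ F.card + ({x, y} : Finset V).card := Finset.card_union_le _ _
        _ ≤ F.card + 2 := by
            have : ({x, y} : Finset V).card ≤ 2 := Finset.card_le_two
            omega
      have h3 := Finset.le_card_sdiff (F ∪ {x, y}) (G.neighborFinset x)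
      omega
    obtain ⟨z, hz⟩ := Finset.card_pos.mp hcard
    simp only [Finset.mem_sdiff, mem_neighborFinset, Finset.mem_union,
      Finset.mem_insert, Finset.mem_singleton, not_or] at hz
    obtain ⟨hxz, hzF, hzx, hzy⟩ := hz
    obtain ⟨l, hlen, hch, hnd, hlF⟩ := ih z y (insert x F) hzy
      (by
        have := Finset.card_insert_le x F
        omega)
    refine ⟨z :: l, ?_, ?_, ?_, ?_⟩
    · simp [hlen]; omega
    · exact List.chain_cons.mpr ⟨hxz, hch⟩
    · rw [List.nodup_cons]
      refine ⟨?_, hnd⟩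
      have hxl : x ∉ l := fun hxl => hlF x hxl (Finset.mem_insert_self x F)
      have h1 : x ≠ z := fun h => hzx h.symm
      simp [h1, hxl, hxy]
    · intro v hv
      rcases List.mem_cons.mp hv with rfl | hv
      · exact hzF
      · exact fun hvF => hlF v hv (Finset.mem_insert_of_mem hvF)

lemma nodup_split {α : Type} {x y : α} {l : List α} (h : (x :: (l ++ [y])).Nodup) :
    (x :: l).Nodup ∧ y ∉ x :: l := by
  have h' : ((x :: l) ++ [y]).Nodup := by simpa using h
  rw [List.nodup_append] at h'
  exact ⟨h'.1, fun hy => h'.2.2 y hy y (List.mem_singleton_self y) rfl⟩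

lemma aux2 {V : Type} [Fintype V] [DecidableEq V] (G : SimpleGraph V) [DecidableRel G.Adj]
    (k : ℕ) (hk : 4 ≤ k)
    (hdeg : ∀ v : V, 10 * k + 1 ≤ G.degree v)
    (hcodeg : ∀ u v : V, 10 * k ≤ (G.neighborFinset u ∩ G.neighborFinset v).card)
    (a b d : V) (hab : G.Adj a b) (hbd : G.Adj b d) (had : a ≠ d) :
    ∃ w : G.Walk a a, w.IsCycle ∧ w.length = 2 * k + 1 ∧
      s(a,b) ∈ w.edges ∧ s(b,d) ∈ w.edges := by
  obtain ⟨q, hqlen, hqch, hqnd, hqF⟩ := exists_chain G k (by omega) hdeg hcodeg (2 * k - 1)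
    (by omega) d a {b} (Ne.symm had) (by simp; omega)
  obtain ⟨hnd1, hnd2⟩ := nodup_split hqnd
  have hbq : b ∉ q := fun h => hqF b h (Finset.mem_singleton_self b)
  obtain ⟨w, hcyc, hlen, hedges⟩ := cycle_of_chain G a b (d :: q) (by simp) hab
    (by exact List.chain_cons.mpr ⟨hbd, hqch⟩)
    (by
      simp only [List.nodup_cons, List.mem_cons, not_or]
      have h1 : a ∉ d :: q := hnd2
      have h2 : (d :: q).Nodup := hnd1
      simp only [List.mem_cons, not_or] at h1
      refine ⟨⟨hab.ne, h1.1, h1.2⟩, ⟨hbd.ne, hbq⟩, (List.nodup_cons.mp h2).1, (List.nodup_cons.mp h2).2⟩)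
  refine ⟨w, hcyc, by simp at hlen ⊢; omega, ?_, ?_⟩
  · rw [hedges]; simp
  · rw [hedges]; simp

lemma aux1 {V : Type} [Fintype V] [DecidableEq V] (G : SimpleGraph V) [DecidableRel G.Adj]
    (k : ℕ) (hk : 4 ≤ k)
    (hdeg : ∀ v : V, 10 * k + 1 ≤ G.degree v)
    (hcodeg : ∀ u v : V, 10 * k ≤ (G.neighborFinset u ∩ G.neighborFinset v).card)
    (a b c d : V) (hab : G.Adj a b) (hcd : G.Adj c d)
    (hac : a ≠ c) (had : a ≠ d) (hbc : b ≠ c) (hbd : b ≠ d) :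
    ∃ w : G.Walk a a, w.IsCycle ∧ w.length = 2 * k + 1 ∧
      s(a,b) ∈ w.edges ∧ s(c,d) ∈ w.edges := by
  -- path of length 2 from b to c avoiding {a, d}
  obtain ⟨l₁, hl₁len, hl₁ch, hl₁nd, hl₁F⟩ := exists_chain G k (by omega) hdeg hcodeg 2
    (by omega) b c ({a, d} : Finset V) hbc
    (by
      have : ({a, d} : Finset V).card ≤ 2 := Finset.card_le_two
      omega)
  obtain ⟨p, hp⟩ : ∃ p : V, l₁ = [p] := by
    match l₁, hl₁len with
    | [p], _ => exact ⟨p, rfl⟩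
  subst hp
  have hbp : G.Adj b p := (List.chain_cons.mp hl₁ch).1
  have hpc : G.Adj p c := (List.chain_cons.mp (List.chain_cons.mp hl₁ch).2).1
  have hpa : p ≠ a := fun h => hl₁F p (by simp) (by simp [h])
  have hpd : p ≠ d := fun h => hl₁F p (by simp) (by simp [h])
  have hl₁nd' : b ≠ p ∧ b ≠ c ∧ p ≠ c := by
    simp only [List.cons_append, List.nil_append, List.nodup_cons, List.mem_cons,
      List.mem_singleton, not_or, List.nodup_nil, List.not_mem_nil] at hl₁nd
    tauto
  -- path of length 2k-3 from d to a avoiding {b, p, c}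
  obtain ⟨q, hqlen, hqch, hqnd, hqF⟩ := exists_chain G k (by omega) hdeg hcodeg (2 * k - 3)
    (by omega) d a ({b, p, c} : Finset V) (Ne.symm had)
    (by
      have : ({b, p, c} : Finset V).card ≤ 3 := Finset.card_le_three
      omega)
  obtain ⟨hnd1, hnd2⟩ := nodup_split hqnd
  have hbq : b ∉ q := fun h => hqF b h (by simp)
  have hpq : p ∉ q := fun h => hqF p h (by simp)
  have hcq : c ∉ q := fun h => hqF c h (by simp)
  have haq : a ∉ d :: q := hnd2
  have hdq : d ∉ q := (List.nodup_cons.mp hnd1).1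
  have hqnd' : q.Nodup := (List.nodup_cons.mp hnd1).2
  simp only [List.mem_cons, not_or] at haq
  obtain ⟨w, hcyc, hlen, hedges⟩ := cycle_of_chain G a b (p :: c :: d :: q) (by simp) hab
    (by
      refine List.chain_cons.mpr ⟨hbp, ?_⟩
      refine List.chain_cons.mpr ⟨hpc, ?_⟩
      refine List.chain_cons.mpr ⟨hcd, ?_⟩
      exact hqch)
    (by
      simp only [List.nodup_cons, List.mem_cons, not_or]
      refine ⟨⟨hab.ne, Ne.symm hpa, hac, had, haq.2⟩, ⟨hl₁nd'.1, hbc, hbd, hbq⟩,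
        ⟨hl₁nd'.2.2, hpd, hpq⟩, ⟨hcd.ne, hcq⟩, hdq, hqnd'⟩)
  refine ⟨w, hcyc, by simp at hlen ⊢; omega, ?_, ?_⟩
  · rw [hedges]; simp
  · rw [hedges]; simp

/-- Let `k ≥ 4` and let `G` be a simple graph on `m` vertices whose minimum degree is at least
`m/2 + 5k`. Then any two distinct edges of `G` lie on a common cycle of length `2k+1`. -/
theorem statement9 {V : Type} [Fintype V] (G : SimpleGraph V) [DecidableRel G.Adj]
    (k m : ℕ) (hk : 4 ≤ k) (hm : Fintype.card V = m)
    (hδ : ∀ v : V, (m : ℝ) / 2 + 5 * (k : ℝ) ≤ (G.degree v : ℝ)) :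
    ∀ e₁ ∈ G.edgeSet, ∀ e₂ ∈ G.edgeSet, e₁ ≠ e₂ →
      ∃ (v : V) (w : G.Walk v v), w.IsCycle ∧ w.length = 2 * k + 1 ∧
        e₁ ∈ w.edges ∧ e₂ ∈ w.edges := by
  have : DecidableEq V := Classical.decEq V
  have hdeg : ∀ v : V, 10 * k + 1 ≤ G.degree v := by
    intro v
    have h1 := hδ v
    have h2 : G.degree v < m := by rw [← hm]; exact G.degree_lt_card_verts v
    have h3 : (m : ℝ) + 10 * (k : ℝ) ≤ 2 * (G.degree v : ℝ) := by linarith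
    have h4 : ((m + 10 * k : ℕ) : ℝ) ≤ ((2 * G.degree v : ℕ) : ℝ) := by push_cast; linarith
    have h5 : m + 10 * k ≤ 2 * G.degree v := by exact_mod_cast h4
    omega
  have hcodeg : ∀ u v : V, 10 * k ≤ (G.neighborFinset u ∩ G.neighborFinset v).card := by
    intro u v
    have hu := hδ u
    have hv := hδ v
    have hsum : ((m + 10 * k : ℕ) : ℝ) ≤ ((G.degree u + G.degree v : ℕ) : ℝ) := by
      push_cast; linarith
    have hsum' : m + 10 * k ≤ G.degree u + G.degree v := by exact_mod_cast hsum
    have hunion : (G.neighborFinset u ∪ G.neighborFinset v).card ≤ m := by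
      rw [← hm]; exact Finset.card_le_univ _
    have hie := Finset.card_union_add_card_inter (G.neighborFinset u) (G.neighborFinset v)
    have hdu : (G.neighborFinset u).card = G.degree u := G.card_neighborFinset_eq_degree u
    have hdv : (G.neighborFinset v).card = G.degree v := G.card_neighborFinset_eq_degree v
    omega
  intro e₁ he₁ e₂ he₂ hne
  induction e₁ using Sym2.ind with
  | _ a b =>
  induction e₂ using Sym2.ind with
  | _ c d =>
  rw [mem_edgeSet] at he₁ he₂
  by_cases hbc : b = c
  · subst hbc
    have had : a ≠ d := by
      rintro rfl
      exact hne (Sym2.eq_swap)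
    obtain ⟨w, hcyc, hlen, h1, h2⟩ := aux2 G k hk hdeg hcodeg a b d he₁ he₂ had
    exact ⟨a, w, hcyc, hlen, h1, h2⟩
  · by_cases hbd : b = d
    · subst hbd
      have hac : a ≠ c := by
        rintro rfl
        exact hne rfl
      obtain ⟨w, hcyc, hlen, h1, h2⟩ := aux2 G k hk hdeg hcodeg a b c he₁ he₂.symm hac
      refine ⟨a, w, hcyc, hlen, h1, ?_⟩
      rw [Sym2.eq_swap]; exact h2
    · by_cases hac : a = c
      · subst hac
        have hbd' : b ≠ d := hbd
        obtain ⟨w, hcyc, hlen, h1, h2⟩ := aux2 G k hk hdeg hcodeg b a d he₁.symm he₂ hbd'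
        refine ⟨b, w, hcyc, hlen, ?_, h2⟩
        rw [Sym2.eq_swap]; exact h1
      · by_cases had : a = d
        · subst had
          have hbc' : b ≠ c := hbc
          obtain ⟨w, hcyc, hlen, h1, h2⟩ := aux2 G k hk hdeg hcodeg b a c he₁.symm he₂.symm hbc'
          refine ⟨b, w, hcyc, hlen, ?_, ?_⟩
          · rw [Sym2.eq_swap]; exact h1
          · rw [Sym2.eq_swap]; exact h2
        · obtain ⟨w, hcyc, hlen, h1, h2⟩ :=
            aux1 G k hk hdeg hcodeg a b c d he₁ he₂ hac had hbc hbd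
          exact ⟨a, w, hcyc, hlen, h1, h2⟩
end

section
/- Let k ≥ 4 be an integer and let G = (V, E) be a simple graph with minimum degree at least 2k satisfying: (i) for every vertex set T ⊆ V with |T| ≤ 2k − 4 and any two vertices u, v ∉ T, there is a path of length exactly 4 from u to v in G avoiding all vertices of T; and (ii) there is a vertex set A ⊆ V such that any two vertices of A are at distance at most 3 in G. Then any two distinct edges of G, each having at least one endpoint in A, lie on a common cycle of length 2k+1. -/
set_option linter.unusedSectionVars false
open SimpleGraph Walk Finset

variable {V : Type} [Fintype V] {G : SimpleGraph V} [DecidableRel G.Adj]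

/-- take/drop intersection helper -/
lemma take_drop_inter {u v w x : V} [DecidableEq V] (p : G.Walk u v) (hp : p.IsPath) (h : w ∈ p.support)
    (hx1 : x ∈ (p.takeUntil w h).support) (hx2 : x ∈ (p.dropUntil w h).support) : x = w := by
  have hnd : p.support.Nodup := hp.support_nodup
  rw [← p.take_spec h, Walk.support_append, List.nodup_append] at hnd
  rw [(p.dropUntil w h).support_eq_cons, List.mem_cons] at hx2
  rcases hx2 with rfl | hx2
  · rfl
  · exact absurd hx1 (fun hx1 => hnd.2.2 _ hx1 _ hx2 rfl)

lemma start_not_mem_dropUntil {u v w : V} [DecidableEq V] (p : G.Walk u v) (hp : p.IsPath)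
    (h : w ∈ p.support) (hwu : w ≠ u) : u ∉ (p.dropUntil w h).support := fun hu =>
  hwu ((take_drop_inter p hp h (p.takeUntil w h).start_mem_support hu).symm)

lemma end_not_mem_takeUntil {u v w : V} [DecidableEq V] (p : G.Walk u v) (hp : p.IsPath)
    (h : w ∈ p.support) (hwv : w ≠ v) : v ∉ (p.takeUntil w h).support := fun hv =>
  hwv ((take_drop_inter p hp h hv (p.dropUntil w h).end_mem_support).symm)

lemma length_dropUntil_le' {u v w : V} [DecidableEq V] (p : G.Walk u v) (h : w ∈ p.support) :
    (p.dropUntil w h).length ≤ p.length := by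
  have := congr_arg Walk.length (p.take_spec h)
  rw [Walk.length_append] at this
  omega

lemma isPath_concat {u v w : V} {p : G.Walk u v} (hp : p.IsPath) (h : G.Adj v w)
    (hw : w ∉ p.support) : (p.concat h).IsPath := by
  rw [Walk.isPath_def, Walk.support_concat]
  refine List.Nodup.append hp.support_nodup (by simp) ?_
  intro a ha hb
  simp only [List.mem_singleton] at hb
  subst hb
  exact hw ha

lemma edge_ends_not_mem {u v : V} (q : G.Walk u v) (hq : q.IsPath) (h2 : 2 ≤ q.length) :
    s(u, v) ∉ q.edges := by
  cases q with
  | nil => simp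
  | @cons _ m _ h q' =>
    intro hmem
    rw [Walk.edges_cons, List.mem_cons] at hmem
    rcases hmem with heq | hmem
    · rw [Sym2.eq_iff] at heq
      rcases heq with ⟨-, rfl⟩ | ⟨rfl, rfl⟩
      · have hq' : q'.IsPath := hq.of_cons
        rw [Walk.isPath_iff_eq_nil] at hq'
        subst hq'
        simp at h2
      · exact h.ne rfl
    · have : u ∈ q'.support := q'.fst_mem_support_of_mem_edges hmem
      rw [Walk.cons_isPath_iff] at hq
      exact hq.2 this


lemma exists_path_avoid {k : ℕ} (hk : 4 ≤ k) (hδ : ∀ v : V, 2 * k ≤ G.degree v)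
    (h4 : ∀ T : Finset V, T.card ≤ 2 * k - 4 → ∀ u v : V, u ∉ T → v ∉ T → u ≠ v →
      ∃ p : G.Walk u v, p.IsPath ∧ p.length = 4 ∧ ∀ z ∈ p.support, z ∉ T) :
    ∀ L : ℕ, 4 ≤ L → ∀ (T : Finset V) (u v : V), T.card + L ≤ 2 * k → u ∉ T → v ∉ T → u ≠ v →
      ∃ p : G.Walk u v, p.IsPath ∧ p.length = L ∧ ∀ z ∈ p.support, z ∉ T := by
  intro L hL
  induction L, hL using Nat.le_induction with
  | base =>
    intro T u v hcard hu hv huv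
    exact h4 T (by omega) u v hu hv huv
  | succ L hL IH =>
    intro T u v hcard hu hv huv
    classical
    have hdeg : 2 * k ≤ (G.neighborFinset u).card := by
      rw [card_neighborFinset_eq_degree]; exact hδ u
    have hns : ¬ (G.neighborFinset u ⊆ insert u (insert v T)) := by
      intro hsub
      have h1 := Finset.card_le_card hsub
      have h2 : (insert u (insert v T)).card ≤ T.card + 2 :=
        le_trans (Finset.card_insert_le _ _)
          (by have := Finset.card_insert_le v T; omega)
      omega
    obtain ⟨u', hu'mem, hu'nin⟩ := Finset.not_subset.mp hns
    rw [mem_neighborFinset] at hu'mem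
    simp only [Finset.mem_insert, not_or] at hu'nin
    obtain ⟨hu'u, hu'v, hu'T⟩ := hu'nin
    have hcard' : (insert u T).card + L ≤ 2 * k := by
      have := Finset.card_insert_le u T; omega
    obtain ⟨p, hp, hplen, hpT⟩ := IH (insert u T) u' v hcard'
      (by simp [hu'u, hu'T]) (by simp [Ne.symm huv, hv]) hu'v
    refine ⟨Walk.cons hu'mem p, ?_, ?_, ?_⟩
    · rw [Walk.cons_isPath_iff]
      exact ⟨hp, fun hx => (hpT u hx) (Finset.mem_insert_self u T)⟩
    · simp [hplen]
    · intro z hz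
      rw [Walk.support_cons, List.mem_cons] at hz
      rcases hz with rfl | hz
      · exact hu
      · exact fun hzT => (hpT z hz) (Finset.mem_insert_of_mem hzT)

lemma close_cycle {k : ℕ} (hk : 4 ≤ k) (hδ : ∀ v : V, 2 * k ≤ G.degree v)
    (h4 : ∀ T : Finset V, T.card ≤ 2 * k - 4 → ∀ u v : V, u ∉ T → v ∉ T → u ≠ v →
      ∃ p : G.Walk u v, p.IsPath ∧ p.length = 4 ∧ ∀ z ∈ p.support, z ∉ T)
    {x y : V} (hxy : x ≠ y) (W : G.Walk x y) (hW : W.IsPath)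
    (hl1 : 1 ≤ W.length) (hl2 : W.length ≤ 2 * k - 3) :
    ∃ c : G.Walk x x, c.IsCycle ∧ c.length = 2 * k + 1 ∧ ∀ e ∈ W.edges, e ∈ c.edges := by
  classical
  set T : Finset V := (W.support.toFinset.erase x).erase y with hT
  have hxT : x ∉ T := by simp [hT, Finset.mem_erase]
  have hyT : y ∉ T := by simp [hT, Finset.mem_erase]
  have hmemT : ∀ z, z ∈ W.support → z ≠ x → z ≠ y → z ∈ T := by
    intro z hz hzx hzy
    simp [hT, Finset.mem_erase, hzx, hzy, List.mem_toFinset.mpr hz]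
  have hTsub : ∀ z, z ∈ T → z ∈ W.support := by
    intro z hz
    simp only [hT, Finset.mem_erase, List.mem_toFinset] at hz
    exact hz.2.2
  have hcardT : T.card + 1 = W.length := by
    have h1 : W.support.toFinset.card = W.length + 1 := by
      rw [List.toFinset_card_of_nodup hW.support_nodup, Walk.length_support]
    have hx' : x ∈ W.support.toFinset := List.mem_toFinset.mpr W.start_mem_support
    have hy' : y ∈ W.support.toFinset.erase x :=
      Finset.mem_erase.mpr ⟨hxy.symm, List.mem_toFinset.mpr W.end_mem_support⟩
    rw [hT, Finset.card_erase_of_mem hy', Finset.card_erase_of_mem hx']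
    omega
  obtain ⟨q, hq, hqlen, hqT⟩ := exists_path_avoid hk hδ h4 (2 * k + 1 - W.length) (by omega)
    T y x (by omega) hyT hxT hxy.symm
  -- decompose W
  cases W with
  | nil => simp at hl1
  | @cons _ m _ hxm W₁ =>
    rw [Walk.cons_isPath_iff] at hW
    obtain ⟨hW₁, hxW₁⟩ := hW
    have hpath : (W₁.append q).IsPath := by
      rw [Walk.isPath_def, Walk.support_append, List.nodup_append]
      refine ⟨hW₁.support_nodup, List.Nodup.sublist (List.tail_sublist q.support) hq.support_nodup, ?_⟩
      intro z hzW z' hzq hzz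
      subst hzz
      have hzy : z ≠ y := by
        intro rfl_z
        subst rfl_z
        have := hq.support_nodup
        rw [q.support_eq_cons] at this
        exact (List.nodup_cons.mp this).1 hzq
      have hzx : z ≠ x := fun h => hxW₁ (h ▸ hzW)
      have hzT : z ∈ T := hmemT z (by rw [Walk.support_cons]; exact List.mem_cons_of_mem _ hzW) hzx hzy
      exact hqT z (List.mem_of_mem_tail hzq) hzT
    have hedge : s(x, m) ∉ (W₁.append q).edges := by
      rw [Walk.edges_append, List.mem_append]
      rintro (h | h)
      · exact hxW₁ (W₁.fst_mem_support_of_mem_edges h)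
      · have hmq : m ∈ q.support := q.snd_mem_support_of_mem_edges h
        have hmx : m ≠ x := hxm.ne'
        by_cases hmy : m = y
        · subst hmy
          have h2 : 2 ≤ q.length := by omega
          exact edge_ends_not_mem q hq h2 (Sym2.eq_swap ▸ h)
        · have : m ∈ T := hmemT m (by rw [Walk.support_cons]; exact List.mem_cons_of_mem _ W₁.start_mem_support) hmx hmy
          exact hqT m hmq this
    refine ⟨Walk.cons hxm (W₁.append q), ?_, ?_, ?_⟩
    · exact (Walk.cons_isCycle_iff _ _).mpr ⟨hpath, hedge⟩
    · rw [Walk.length_cons, Walk.length_append]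
      simp only [Walk.length_cons] at hqlen hl2
      omega
    · intro e he
      rw [Walk.edges_cons, List.mem_cons] at he ⊢
      rcases he with rfl | he
      · exact Or.inl rfl
      · exact Or.inr (by rw [Walk.edges_append, List.mem_append]; exact Or.inl he)

lemma main_aux {k : ℕ} (hk : 4 ≤ k) (hδ : ∀ v : V, 2 * k ≤ G.degree v)
    (h4 : ∀ T : Finset V, T.card ≤ 2 * k - 4 → ∀ u v : V, u ∉ T → v ∉ T → u ≠ v →
      ∃ p : G.Walk u v, p.IsPath ∧ p.length = 4 ∧ ∀ z ∈ p.support, z ∉ T)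
    {A : Set V} (hA : ∀ x ∈ A, ∀ y ∈ A, ∃ w : G.Walk x y, w.length ≤ 3)
    (a b c d : V) (hab : G.Adj a b) (hcd : G.Adj c d) (hne : s(a, b) ≠ s(c, d))
    (haA : a ∈ A) (hcA : c ∈ A) :
    ∃ (v : V) (w : G.Walk v v), w.IsCycle ∧ w.length = 2 * k + 1 ∧
      s(a, b) ∈ w.edges ∧ s(c, d) ∈ w.edges := by
  classical
  have hab' : a ≠ b := hab.ne
  have hcd' : c ≠ d := hcd.ne
  by_cases hbc : b = c
  · subst hbc
    have had : a ≠ d := by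
      rintro rfl
      exact hne Sym2.eq_swap
    have hW : (Walk.cons hab (Walk.cons hcd Walk.nil)).IsPath := by
      simp [Walk.isPath_def, hab', had, hcd']
    obtain ⟨cyc, h1, h2, h3⟩ := close_cycle hk hδ h4 had _ hW (by simp) (by simp; omega)
    exact ⟨a, cyc, h1, h2, h3 _ (by simp), h3 _ (by simp)⟩
  by_cases hbd : b = d
  · subst hbd
    have hac : a ≠ c := by
      rintro rfl
      exact hne rfl
    have hW : (Walk.cons hab (Walk.cons hcd.symm Walk.nil)).IsPath := by
      simp [Walk.isPath_def, hab', hac, hbc]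
    obtain ⟨cyc, h1, h2, h3⟩ := close_cycle hk hδ h4 hac _ hW (by simp) (by simp; omega)
    refine ⟨a, cyc, h1, h2, h3 _ (by simp), ?_⟩
    rw [show s(c, b) = s(b, c) from Sym2.eq_swap]
    exact h3 _ (by simp)
  by_cases hac : a = c
  · subst hac
    have hbd' : b ≠ d := by
      rintro rfl
      exact hne rfl
    have hW : (Walk.cons hab.symm (Walk.cons hcd Walk.nil)).IsPath := by
      simp [Walk.isPath_def, hab.ne', hbd', hcd']
    obtain ⟨cyc, h1, h2, h3⟩ := close_cycle hk hδ h4 hbd' _ hW (by simp) (by simp; omega)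
    refine ⟨b, cyc, h1, h2, ?_, h3 _ (by simp)⟩
    rw [show s(a, b) = s(b, a) from Sym2.eq_swap]
    exact h3 _ (by simp)
  by_cases had : a = d
  · subst had
    have hW : (Walk.cons hab.symm (Walk.cons hcd.symm Walk.nil)).IsPath := by
      simp [Walk.isPath_def, hab.ne', hbc, Ne.symm hcd.ne]
    obtain ⟨cyc, h1, h2, h3⟩ := close_cycle hk hδ h4 hbc _ hW (by simp) (by simp; omega)
    refine ⟨b, cyc, h1, h2, ?_, ?_⟩
    · rw [show s(a, b) = s(b, a) from Sym2.eq_swap]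
      exact h3 _ (by simp)
    · rw [show s(c, a) = s(a, c) from Sym2.eq_swap]
      exact h3 _ (by simp)
  -- all four vertices distinct
  obtain ⟨w0, hw0len⟩ := hA a haA c hcA
  set p₀ := w0.bypass with hp₀def
  have hp₀ : p₀.IsPath := w0.bypass_isPath
  have hp₀len : p₀.length ≤ 3 := (w0.length_bypass_le).trans hw0len
  by_cases hb : b ∈ p₀.support
  · set q₁ := p₀.dropUntil b hb with hq₁def
    have hq₁path : q₁.IsPath := hp₀.dropUntil hb
    have hq₁len : q₁.length ≤ 3 := (length_dropUntil_le' p₀ hb).trans hp₀len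
    have haq₁ : a ∉ q₁.support := start_not_mem_dropUntil p₀ hp₀ hb hab.ne'
    by_cases hd : d ∈ q₁.support
    · set q₂ := q₁.takeUntil d hd with hq₂def
      have hq₂path : q₂.IsPath := hq₁path.takeUntil hd
      have hq₂len : q₂.length ≤ 3 := (q₁.length_takeUntil_le hd).trans hq₁len
      have haq₂ : a ∉ q₂.support := fun h => haq₁ (q₁.support_takeUntil_subset hd h)
      have hcq₂ : c ∉ q₂.support := end_not_mem_takeUntil q₁ hq₁path hd hcd.ne'
      have hW : ((Walk.cons hab q₂).concat hcd.symm).IsPath := by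
        refine isPath_concat (Walk.IsPath.cons hq₂path haq₂) hcd.symm ?_
        rw [Walk.support_cons, List.mem_cons]
        rintro (rfl | h)
        · exact hac rfl
        · exact hcq₂ h
      obtain ⟨cyc, h1, h2, h3⟩ := close_cycle hk hδ h4 hac _ hW
        (by rw [Walk.length_concat, Walk.length_cons]; omega)
        (by rw [Walk.length_concat, Walk.length_cons]; omega)
      refine ⟨a, cyc, h1, h2, h3 _ (by simp [Walk.edges_concat, Walk.edges_cons]), ?_⟩
      rw [show s(c, d) = s(d, c) from Sym2.eq_swap]
      exact h3 _ (by simp [Walk.edges_concat, Walk.edges_cons])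
    · have hW : ((Walk.cons hab q₁).concat hcd).IsPath := by
        refine isPath_concat (Walk.IsPath.cons hq₁path haq₁) hcd ?_
        rw [Walk.support_cons, List.mem_cons]
        rintro (rfl | h)
        · exact had rfl
        · exact hd h
      obtain ⟨cyc, h1, h2, h3⟩ := close_cycle hk hδ h4 had _ hW
        (by rw [Walk.length_concat, Walk.length_cons]; omega)
        (by rw [Walk.length_concat, Walk.length_cons]; omega)
      exact ⟨a, cyc, h1, h2, h3 _ (by simp [Walk.edges_concat, Walk.edges_cons]),
        h3 _ (by simp [Walk.edges_concat, Walk.edges_cons])⟩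
  · by_cases hd : d ∈ p₀.support
    · set t₁ := p₀.takeUntil d hd with ht₁def
      have ht₁path : t₁.IsPath := hp₀.takeUntil hd
      have ht₁len : t₁.length ≤ 3 := (p₀.length_takeUntil_le hd).trans hp₀len
      have hbt₁ : b ∉ t₁.support := fun h => hb (p₀.support_takeUntil_subset hd h)
      have hct₁ : c ∉ t₁.support := end_not_mem_takeUntil p₀ hp₀ hd hcd.ne'
      have hW : ((Walk.cons hab.symm t₁).concat hcd.symm).IsPath := by
        refine isPath_concat (Walk.IsPath.cons ht₁path hbt₁) hcd.symm ?_
        rw [Walk.support_cons, List.mem_cons]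
        rintro (rfl | h)
        · exact hbc rfl
        · exact hct₁ h
      obtain ⟨cyc, h1, h2, h3⟩ := close_cycle hk hδ h4 hbc _ hW
        (by rw [Walk.length_concat, Walk.length_cons]; omega)
        (by rw [Walk.length_concat, Walk.length_cons]; omega)
      refine ⟨b, cyc, h1, h2, ?_, ?_⟩
      · rw [show s(a, b) = s(b, a) from Sym2.eq_swap]
        exact h3 _ (by simp [Walk.edges_concat, Walk.edges_cons])
      · rw [show s(c, d) = s(d, c) from Sym2.eq_swap]
        exact h3 _ (by simp [Walk.edges_concat, Walk.edges_cons])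
    · have hW : ((Walk.cons hab.symm p₀).concat hcd).IsPath := by
        refine isPath_concat (Walk.IsPath.cons hp₀ hb) hcd ?_
        rw [Walk.support_cons, List.mem_cons]
        rintro (rfl | h)
        · exact hbd rfl
        · exact hd h
      obtain ⟨cyc, h1, h2, h3⟩ := close_cycle hk hδ h4 hbd _ hW
        (by rw [Walk.length_concat, Walk.length_cons]; omega)
        (by rw [Walk.length_concat, Walk.length_cons]; omega)
      refine ⟨b, cyc, h1, h2, ?_, ?_⟩
      · rw [show s(a, b) = s(b, a) from Sym2.eq_swap]
        exact h3 _ (by simp [Walk.edges_concat, Walk.edges_cons])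
      · exact h3 _ (by simp [Walk.edges_concat, Walk.edges_cons])

/-- Let `k ≥ 4` and let `G` be a simple graph with minimum degree at least `2k` such that:
(i) for every vertex set `T` with `|T| ≤ 2k - 4` and any two vertices `u, v ∉ T` there is a
path of length exactly `4` from `u` to `v` avoiding `T`; and (ii) there is a vertex set `A`
any two of whose vertices are at distance at most `3` in `G`. Then any two distinct edges of
`G`, each having an endpoint in `A`, lie on a common cycle of length `2k+1`. -/
theorem statement11 {V : Type} [Fintype V] (G : SimpleGraph V) [DecidableRel G.Adj]
    (k : ℕ) (hk : 4 ≤ k) (hδ : ∀ v : V, 2 * k ≤ G.degree v)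
    (h4 : ∀ T : Finset V, T.card ≤ 2 * k - 4 → ∀ u v : V, u ∉ T → v ∉ T → u ≠ v →
      ∃ p : G.Walk u v, p.IsPath ∧ p.length = 4 ∧ ∀ z ∈ p.support, z ∉ T)
    (A : Set V) (hA : ∀ x ∈ A, ∀ y ∈ A, ∃ w : G.Walk x y, w.length ≤ 3) :
    ∀ e₁ ∈ G.edgeSet, ∀ e₂ ∈ G.edgeSet, e₁ ≠ e₂ →
      (∃ a ∈ e₁, a ∈ A) → (∃ a ∈ e₂, a ∈ A) →
      ∃ (v : V) (w : G.Walk v v), w.IsCycle ∧ w.length = 2 * k + 1 ∧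
        e₁ ∈ w.edges ∧ e₂ ∈ w.edges := by
  intro e₁ he₁ e₂ he₂ hne h₁ h₂
  induction e₁ using Sym2.ind with
  | _ a b =>
  induction e₂ using Sym2.ind with
  | _ c d =>
  rw [SimpleGraph.mem_edgeSet] at he₁ he₂
  obtain ⟨x, hx, hxA⟩ := h₁
  obtain ⟨y, hy, hyA⟩ := h₂
  rw [Sym2.mem_iff] at hx hy
  rcases hx with rfl | rfl <;> rcases hy with rfl | rfl
  · exact main_aux hk hδ h4 hA x b y d he₁ he₂ hne hxA hyA
  · obtain ⟨v, w, h1, h2, h3, h4'⟩ :=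
      main_aux hk hδ h4 hA x b y c he₁ he₂.symm
        (fun h => hne (h.trans Sym2.eq_swap)) hxA hyA
    exact ⟨v, w, h1, h2, h3, Sym2.eq_swap ▸ h4'⟩
  · obtain ⟨v, w, h1, h2, h3, h4'⟩ :=
      main_aux hk hδ h4 hA x a y d he₁.symm he₂
        (fun h => hne ((Sym2.eq_swap).trans h)) hxA hyA
    exact ⟨v, w, h1, h2, Sym2.eq_swap ▸ h3, h4'⟩
  · obtain ⟨v, w, h1, h2, h3, h4'⟩ :=
      main_aux hk hδ h4 hA x a y c he₁.symm he₂.symm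
        (fun h => hne ((Sym2.eq_swap).trans (h.trans Sym2.eq_swap))) hxA hyA
    exact ⟨v, w, h1, h2, Sym2.eq_swap ▸ h3, Sym2.eq_swap ▸ h4'⟩
end

section
/- Let k ≥ 4 be an integer, let 0 < ε < 0.01 be a real number, and let n ≥ 2k·ε^{−13}. Let G = (V, E) be a simple graph with n vertices and e edges, where n²/4 < e < (1/4 + ε⁶)·n², whose minimum degree δ satisfies δ > n/2 − ε³·n − 1/2, equipped with an edge-coloring in which every cycle of length 2k+1 in G is rainbow. Let S ⊆ V be a vertex set with |S| ≤ 5k. Then either any two vertices x, y ∈ V \ S are connected in G by a path P of length 2 or 3 such that no vertex of S lies on P, or the number of colors used by the edge-coloring is at least e/2 + (n/2)·√(e − n²/4) − ε·n². -/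
open SimpleGraph Finset

lemma nearclique_path {V : Type} [Fintype V] [DecidableEq V] (G : SimpleGraph V)
    [DecidableRel G.Adj] (C : Finset V) (d : ℕ)
    (hC : ∀ a ∈ C, (C \ G.neighborFinset a).card ≤ d) :
    ∀ ℓ : ℕ, 2 ≤ ℓ → ∀ u v : V, u ∈ C → v ∈ C → u ≠ v → ∀ F : Finset V,
      u ∉ F → v ∉ F → F.card + 2 * d + ℓ + 2 ≤ C.card →
      ∃ p : G.Walk u v, p.IsPath ∧ p.length = ℓ ∧ ∀ z ∈ p.support, z ∈ C ∧ z ∉ F := by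
  intro ℓ hℓ
  induction ℓ, hℓ using Nat.le_induction with
  | base =>
    intro u v hu hv huv F huF hvF hcard
    have hsub : C \ ((C \ G.neighborFinset u) ∪ (C \ G.neighborFinset v) ∪ F ∪ {u, v}) ≠ ∅ := by
      intro h
      have h1 : C.card ≤ ((C \ G.neighborFinset u) ∪ (C \ G.neighborFinset v) ∪ F ∪ {u, v}).card := by
        have := Finset.card_le_card_sdiff_add_card (s := C)
          (t := (C \ G.neighborFinset u) ∪ (C \ G.neighborFinset v) ∪ F ∪ {u, v})
        rw [h] at this; simpa using this
      have h2 : ((C \ G.neighborFinset u) ∪ (C \ G.neighborFinset v) ∪ F ∪ {u, v}).card ≤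
          d + d + F.card + 2 := by
        calc ((C \ G.neighborFinset u) ∪ (C \ G.neighborFinset v) ∪ F ∪ {u, v}).card
            ≤ (C \ G.neighborFinset u).card + (C \ G.neighborFinset v).card + F.card
              + ({u, v} : Finset V).card := by
              refine le_trans (Finset.card_union_le _ _) ?_
              refine add_le_add (le_trans (Finset.card_union_le _ _) (add_le_add
                (Finset.card_union_le _ _) le_rfl)) le_rfl
          _ ≤ d + d + F.card + 2 := by
              gcongr
              · exact hC u hu
              · exact hC v hv
              · exact Finset.card_insert_le _ _ |>.trans (by simp)
      omega
    obtain ⟨w, hw⟩ := Finset.nonempty_of_ne_empty hsub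
    simp only [Finset.mem_sdiff, Finset.mem_union, Finset.mem_insert, Finset.mem_singleton,
      not_or] at hw
    obtain ⟨hwC, ⟨⟨h1, h2⟩, hwF⟩, hwu', hwv'⟩ := hw
    have hwu : G.Adj u w := by
      rw [← SimpleGraph.mem_neighborFinset]
      by_contra h; exact h1 ⟨hwC, h⟩
    have hwv : G.Adj w v := by
      have : w ∈ G.neighborFinset v := by by_contra h; exact h2 ⟨hwC, h⟩
      exact ((G.mem_neighborFinset v w).mp this).symm
    refine ⟨Walk.cons hwu (Walk.cons hwv Walk.nil), ?_, by simp, ?_⟩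
    · rw [Walk.isPath_def]
      simp [huv, hwu', hwv', Ne.symm hwu', Ne.symm hwv']
    · intro z hz
      simp only [Walk.support_cons, Walk.support_nil, List.mem_cons] at hz
      rcases hz with rfl | hz
      · exact ⟨hu, huF⟩
      rcases hz with rfl | hz
      · exact ⟨hwC, hwF⟩
      rcases hz with rfl | hz
      · exact ⟨hv, hvF⟩
      · simp at hz
  | succ m hm ih =>
    intro u v hu hv huv F huF hvF hcard
    have hsub : C \ ((C \ G.neighborFinset u) ∪ F ∪ {u, v}) ≠ ∅ := by
      intro h
      have h1 : C.card ≤ ((C \ G.neighborFinset u) ∪ F ∪ {u, v}).card := by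
        have := Finset.card_le_card_sdiff_add_card (s := C)
          (t := (C \ G.neighborFinset u) ∪ F ∪ {u, v})
        rw [h] at this; simpa using this
      have h2 : ((C \ G.neighborFinset u) ∪ F ∪ {u, v}).card ≤ d + F.card + 2 := by
        calc ((C \ G.neighborFinset u) ∪ F ∪ {u, v}).card
            ≤ (C \ G.neighborFinset u).card + F.card + ({u, v} : Finset V).card := by
              refine le_trans (Finset.card_union_le _ _) ?_
              exact add_le_add (Finset.card_union_le _ _) le_rfl
          _ ≤ d + F.card + 2 := by
              gcongr
              · exact hC u hu
              · exact Finset.card_insert_le _ _ |>.trans (by simp)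
      omega
    obtain ⟨w, hw⟩ := Finset.nonempty_of_ne_empty hsub
    simp only [Finset.mem_sdiff, Finset.mem_union, Finset.mem_insert, Finset.mem_singleton,
      not_or] at hw
    obtain ⟨hwC, ⟨h1, hwF⟩, hwu', hwv'⟩ := hw
    have hwu : G.Adj u w := by
      rw [← SimpleGraph.mem_neighborFinset]
      by_contra h; exact h1 ⟨hwC, h⟩
    obtain ⟨p, hp, hplen, hpsup⟩ := ih w v hwC hv hwv' (insert u F)
      (by simp [hwF, hwu']) (by simp [hvF, Ne.symm huv])
      (by rw [Finset.card_insert_of_notMem huF] at *; omega)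
    refine ⟨Walk.cons hwu p, ?_, by simp [hplen], ?_⟩
    · refine hp.cons ?_
      intro h
      exact ((hpsup u h).2) (Finset.mem_insert_self u F)
    · intro z hz
      simp only [Walk.support_cons, List.mem_cons] at hz
      rcases hz with rfl | hz
      · exact ⟨hu, huF⟩
      · have := hpsup z hz
        exact ⟨this.1, fun hzF => this.2 (Finset.mem_insert_of_mem hzF)⟩

section
variable {V : Type} [Fintype V] [DecidableEq V] (G : SimpleGraph V) [DecidableRel G.Adj]
    (C : Finset V) (d k : ℕ)

lemma rainbow_adj (hk : 4 ≤ k)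
    (hC : ∀ a ∈ C, (C \ G.neighborFinset a).card ≤ d)
    (hbig : 2 * k + 2 * d + 9 ≤ C.card)
    (χ : Sym2 V → ℕ)
    (hχ : ∀ ⦃v : V⦄ (w : G.Walk v v), w.IsCycle → w.length = 2 * k + 1 →
      (w.edges.map χ).Nodup)
    (a v b : V) (hav : G.Adj a v) (hvb : G.Adj v b) (hab : a ≠ b)
    (haC : a ∈ C) (hvC : v ∈ C) (hbC : b ∈ C) :
    χ s(a,v) ≠ χ s(v,b) := by
  obtain ⟨P2, hP2, hP2len, hP2sup⟩ := nearclique_path G C d hC (2*k-1) (by omega) b a hbC haC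
    (fun h => hab h.symm) {v} (by simp [hvb.ne']) (by simp [hav.ne]) (by simp; omega)
  have hvP2 : v ∉ P2.support := fun h => (hP2sup v h).2 (by simp)
  have hQ : (Walk.cons hvb P2).IsPath := hP2.cons hvP2
  have hcyc : (Walk.cons hav (Walk.cons hvb P2)).IsCycle := by
    rw [Walk.cons_isCycle_iff]
    refine ⟨hQ, ?_⟩
    intro h
    rw [Walk.edges_cons, List.mem_cons] at h
    rcases h with h | h
    · rw [Sym2.eq_iff] at h
      rcases h with ⟨h1, h2⟩ | ⟨h1, h2⟩
      · exact hav.ne h1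
      · exact hab h1
    · exact hvP2 (P2.snd_mem_support_of_mem_edges h)
  have hlen : (Walk.cons hav (Walk.cons hvb P2)).length = 2 * k + 1 := by
    simp [hP2len]; omega
  have := hχ _ hcyc hlen
  rw [Walk.edges_cons, Walk.edges_cons, List.map_cons, List.map_cons, List.nodup_cons] at this
  intro h
  exact this.1 (h ▸ List.mem_cons_self)

lemma rainbow_disj (hk : 4 ≤ k)
    (hC : ∀ a ∈ C, (C \ G.neighborFinset a).card ≤ d)
    (hbig : 2 * k + 2 * d + 9 ≤ C.card)
    (χ : Sym2 V → ℕ)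
    (hχ : ∀ ⦃v : V⦄ (w : G.Walk v v), w.IsCycle → w.length = 2 * k + 1 →
      (w.edges.map χ).Nodup)
    (a b c d' : V) (hab : G.Adj a b) (hcd : G.Adj c d')
    (hac : a ≠ c) (had : a ≠ d') (hbc : b ≠ c) (hbd : b ≠ d')
    (haC : a ∈ C) (hbC : b ∈ C) (hcC : c ∈ C) (hdC : d' ∈ C) :
    χ s(a,b) ≠ χ s(c,d') := by
  obtain ⟨P1, hP1, hP1len, hP1sup⟩ := nearclique_path G C d hC 2 le_rfl b c hbC hcC hbc
    ({a, d'}) (by simp [hab.ne', hbd]) (by simp [Ne.symm hac, hcd.ne]) (by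
      rw [Finset.card_insert_of_notMem (by simp [had]), Finset.card_singleton]; omega)
  have haP1 : a ∉ P1.support := fun h => (hP1sup a h).2 (by simp)
  have hdP1 : d' ∉ P1.support := fun h => (hP1sup d' h).2 (by simp)
  obtain ⟨P2, hP2, hP2len, hP2sup⟩ := nearclique_path G C d hC (2*k-3) (by omega) d' a hdC haC
    (Ne.symm had) P1.support.toFinset (by simpa using hdP1) (by simpa using haP1) (by
      have h1 : P1.support.toFinset.card ≤ P1.support.length := P1.support.toFinset_card_le
      have h2 : P1.support.length = 3 := by rw [SimpleGraph.Walk.length_support, hP1len]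
      omega)
  have hdisj : ∀ z ∈ P2.support, z ∉ P1.support := by
    intro z hz h
    exact (hP2sup z hz).2 (List.mem_toFinset.mpr h)
  have hQ : (P1.append (Walk.cons hcd P2)).IsPath := by
    rw [Walk.isPath_def, Walk.support_append, Walk.support_cons, List.tail_cons]
    refine List.Nodup.append (Walk.isPath_def _ |>.mp hP1) (Walk.isPath_def _ |>.mp hP2) ?_
    intro z hz1 hz2
    exact hdisj z hz2 hz1
  have hbP2 : b ∉ P2.support := fun h => hdisj b h P1.start_mem_support
  have hcyc : (Walk.cons hab (P1.append (Walk.cons hcd P2))).IsCycle := by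
    rw [Walk.cons_isCycle_iff]
    refine ⟨hQ, ?_⟩
    intro h
    rw [Walk.edges_append, Walk.edges_cons, List.mem_append, List.mem_cons] at h
    rcases h with h | h | h
    · exact haP1 (P1.fst_mem_support_of_mem_edges h)
    · rw [Sym2.eq_iff] at h
      rcases h with ⟨h1, h2⟩ | ⟨h1, h2⟩
      · exact hac h1
      · exact had h1
    · exact hbP2 (P2.snd_mem_support_of_mem_edges h)
  have hlen : (Walk.cons hab (P1.append (Walk.cons hcd P2))).length = 2 * k + 1 := by
    rw [Walk.length_cons, Walk.length_append, Walk.length_cons, hP1len, hP2len]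
    omega
  have hnd := hχ _ hcyc hlen
  rw [Walk.edges_cons, List.map_cons, List.nodup_cons] at hnd
  intro h
  refine hnd.1 ?_
  rw [h]
  refine List.mem_map_of_mem (f := χ) ?_
  rw [Walk.edges_append, Walk.edges_cons, List.mem_append, List.mem_cons]
  exact Or.inr (Or.inl rfl)
end

section
variable {V : Type} [Fintype V] [DecidableEq V] (G : SimpleGraph V) [DecidableRel G.Adj]
    (C : Finset V) (d k : ℕ)

lemma rainbow_inj (hk : 4 ≤ k)
    (hC : ∀ a ∈ C, (C \ G.neighborFinset a).card ≤ d)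
    (hbig : 2 * k + 2 * d + 9 ≤ C.card)
    (χ : Sym2 V → ℕ)
    (hχ : ∀ ⦃v : V⦄ (w : G.Walk v v), w.IsCycle → w.length = 2 * k + 1 →
      (w.edges.map χ).Nodup) :
    ∀ e1 e2 : Sym2 V, e1 ∈ G.edgeSet → e2 ∈ G.edgeSet → (∀ z ∈ e1, z ∈ C) →
      (∀ z ∈ e2, z ∈ C) → e1 ≠ e2 → χ e1 ≠ χ e2 := by
  intro e1 e2
  induction e1 using Sym2.ind with | _ a b =>
  induction e2 using Sym2.ind with | _ c d' =>
  intro h1 h2 h1C h2C hne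
  rw [SimpleGraph.mem_edgeSet] at h1 h2
  have haC : a ∈ C := h1C a (Sym2.mem_mk_left _ _)
  have hbC : b ∈ C := h1C b (Sym2.mem_mk_right _ _)
  have hcC : c ∈ C := h2C c (Sym2.mem_mk_left _ _)
  have hdC : d' ∈ C := h2C d' (Sym2.mem_mk_right _ _)
  by_cases hbc : b = c
  · subst hbc
    have had : a ≠ d' := by rintro rfl; exact hne (Sym2.eq_swap)
    exact rainbow_adj G C d k hk hC hbig χ hχ a b d' h1 h2 had haC hbC hdC
  · by_cases hbd : b = d'
    · subst hbd
      have hac : a ≠ c := by rintro rfl; exact hne rfl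
      rw [Sym2.eq_swap (a := c)]
      exact rainbow_adj G C d k hk hC hbig χ hχ a b c h1 h2.symm hac haC hbC hcC
    · by_cases hac : a = c
      · subst hac
        rw [Sym2.eq_swap (a := a) (b := b)]
        exact rainbow_adj G C d k hk hC hbig χ hχ b a d' h1.symm h2 hbd hbC haC hdC
      · by_cases had : a = d'
        · subst had
          rw [Sym2.eq_swap (a := a) (b := b), Sym2.eq_swap (a := c)]
          exact rainbow_adj G C d k hk hC hbig χ hχ b a c h1.symm h2.symm hbc hbC haC hcC
        · exact rainbow_disj G C d k hk hC hbig χ hχ a b c d' h1 h2 hac had hbc hbd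
            haC hbC hcC hdC

lemma colors_ge (hk : 4 ≤ k)
    (hC : ∀ a ∈ C, (C \ G.neighborFinset a).card ≤ d)
    (hbig : 2 * k + 2 * d + 9 ≤ C.card)
    (χ : Sym2 V → ℕ)
    (hχ : ∀ ⦃v : V⦄ (w : G.Walk v v), w.IsCycle → w.length = 2 * k + 1 →
      (w.edges.map χ).Nodup) :
    (G.edgeFinset.filter (fun e => ∀ z ∈ e, z ∈ C)).card ≤ (G.edgeFinset.image χ).card := by
  apply Finset.card_le_card_of_injOn χ
  · intro e he
    rw [Finset.mem_coe, Finset.mem_filter] at he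
    exact Finset.mem_image_of_mem χ he.1
  · intro e1 he1 e2 he2 hχeq
    rw [Finset.mem_coe, Finset.mem_filter, SimpleGraph.mem_edgeFinset] at he1 he2
    by_contra hne
    exact rainbow_inj G C d k hk hC hbig χ hχ e1 e2 he1.1 he2.1 he1.2 he2.2 hne hχeq
end


lemma nearclique_count {V : Type} [Fintype V] [DecidableEq V] (G : SimpleGraph V)
    [DecidableRel G.Adj] (A B R : Finset V)
    (hR : ∀ w : V, w ∉ A → w ∉ B → w ∈ R)
    (hnoadj : ∀ a ∈ A, ∀ b ∈ B, ¬ G.Adj a b) (a : V) (ha : a ∈ A) :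
    (A \ G.neighborFinset a).card + G.degree a ≤ A.card + R.card := by
  have hsub : G.neighborFinset a ⊆ (G.neighborFinset a ∩ A) ∪ R := by
    intro w hw
    have hadj : G.Adj a w := (G.mem_neighborFinset a w).mp hw
    by_cases hwA : w ∈ A
    · exact Finset.mem_union_left _ (Finset.mem_inter.mpr ⟨hw, hwA⟩)
    · refine Finset.mem_union_right _ (hR w hwA ?_)
      intro hwB
      exact hnoadj a ha w hwB hadj
  have h1 : G.degree a ≤ (G.neighborFinset a ∩ A).card + R.card := by
    rw [← G.card_neighborFinset_eq_degree]
    exact (Finset.card_le_card hsub).trans (Finset.card_union_le _ _)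
  have h2 : (A \ G.neighborFinset a).card + (A ∩ G.neighborFinset a).card = A.card :=
    Finset.card_sdiff_add_card_inter _ _
  rw [Finset.inter_comm] at h2
  omega

set_option maxHeartbeats 2000000 in
/-- Let `k ≥ 4`, `0 < ε < 0.01`, and `n ≥ 2k ε⁻¹³`. Let `G` be a simple graph with `n` vertices
and `e` edges, `n²/4 < e < (1/4 + ε⁶) n²`, whose minimum degree `δ` satisfies
`δ > n/2 - ε³ n - 1/2`, equipped with an edge-coloring in which every cycle of length `2k+1` is
rainbow. Let `S` be a vertex set with `|S| ≤ 5k`. Then either any two vertices `x, y ∉ S` are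
connected by a path of length `2` or `3` avoiding `S`, or the number of colors used is at least
`e/2 + (n/2)·√(e - n²/4) - ε n²`. -/
theorem statement12 {V : Type} [Fintype V] (G : SimpleGraph V) [DecidableRel G.Adj]
    (k n e : ℕ) (hk : 4 ≤ k) (ε : ℝ) (hε0 : 0 < ε) (hε1 : ε < 0.01)
    (hn : Fintype.card V = n) (hnk : 2 * (k : ℝ) * ε ^ (-13 : ℤ) ≤ (n : ℝ))
    (he : G.edgeSet.ncard = e)
    (he1 : (n : ℝ) ^ 2 / 4 < (e : ℝ)) (he2 : (e : ℝ) < (1 / 4 + ε ^ 6) * (n : ℝ) ^ 2)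
    (hδ : ∀ v : V, (n : ℝ) / 2 - ε ^ 3 * (n : ℝ) - 1 / 2 < (G.degree v : ℝ))
    (χ : Sym2 V → ℕ)
    (hχ : ∀ ⦃v : V⦄ (w : G.Walk v v), w.IsCycle → w.length = 2 * k + 1 →
      (w.edges.map χ).Nodup)
    (S : Finset V) (hS : S.card ≤ 5 * k) :
    (∀ x y : V, x ∉ S → y ∉ S → x ≠ y →
      ∃ p : G.Walk x y, p.IsPath ∧ (p.length = 2 ∨ p.length = 3) ∧
        ∀ z ∈ p.support, z ∉ S) ∨
    (e : ℝ) / 2 + (n : ℝ) / 2 * Real.sqrt ((e : ℝ) - (n : ℝ) ^ 2 / 4) - ε * (n : ℝ) ^ 2 ≤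
      ((χ '' G.edgeSet).ncard : ℝ) := by
  classical
  by_cases H : (∀ x y : V, x ∉ S → y ∉ S → x ≠ y →
      ∃ p : G.Walk x y, p.IsPath ∧ (p.length = 2 ∨ p.length = 3) ∧
        ∀ z ∈ p.support, z ∉ S)
  · exact Or.inl H
  right
  push_neg at H
  obtain ⟨x, y, hxS, hyS, hxy, hP⟩ := H
  ------------------------------------------------------------------
  -- numeric groundwork
  have hε2 : ε ≤ 1/100 := by norm_num at hε1; linarith
  have hεle1 : ε ≤ 1 := by linarith
  have hp13 : (0:ℝ) < ε^13 := by positivity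
  have hnk' : 2 * (k:ℝ) ≤ ε^13 * n := by
    have : ε ^ (-13 : ℤ) = (ε^13)⁻¹ := by
      rw [zpow_neg, ← zpow_natCast ε 13]
      norm_num
    rw [this] at hnk
    calc 2 * (k:ℝ) = (2 * k * (ε^13)⁻¹) * ε^13 := by field_simp
      _ ≤ n * ε^13 := by gcongr
      _ = ε^13 * n := by ring
  have hk4 : (4:ℝ) ≤ (k:ℝ) := by exact_mod_cast hk
  have hn0 : (0:ℝ) ≤ n := Nat.cast_nonneg n
  have hε13n : (8:ℝ) ≤ ε^13 * n := by linarith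
  have hε13ε : ε^13 ≤ ε := by
    calc ε^13 ≤ ε^1 := pow_le_pow_of_le_one hε0.le hεle1 (by norm_num)
      _ = ε := pow_one ε
  have hε3ε : ε^3 ≤ ε := by
    calc ε^3 ≤ ε^1 := pow_le_pow_of_le_one hε0.le hεle1 (by norm_num)
      _ = ε := pow_one ε
  have hε3small : ε^3 ≤ 1/1000000 := by
    calc ε^3 ≤ (1/100)^3 := by gcongr
      _ ≤ 1/1000000 := by norm_num
  have hε13small : ε^13 ≤ 1/1000000 := by
    calc ε^13 ≤ ε^3 := pow_le_pow_of_le_one hε0.le hεle1 (by norm_num)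
      _ ≤ 1/1000000 := hε3small
  have hεn8 : (8:ℝ) ≤ ε * n := by
    have : ε^13 * n ≤ ε * n := by
      have := mul_le_mul_of_nonneg_right hε13ε hn0
      linarith
    linarith
  have hnbig : (1000000:ℝ) ≤ n := by
    nlinarith [hε13n, hε13small, hn0]
  have hkn : 5 * (k:ℝ) ≤ (5/2) * (ε^13 * n) := by linarith
  have pe3 : ε^3*(n:ℝ) ≤ (1/1000000)*(n:ℝ) := mul_le_mul_of_nonneg_right hε3small hn0
  have pe13 : ε^13*(n:ℝ) ≤ (1/1000000)*(n:ℝ) := mul_le_mul_of_nonneg_right hε13small hn0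
  have num1 : 2*ε^3*(n:ℝ) + 5*(k:ℝ) + 3 ≤ (n:ℝ)/100 - 1 := by
    linarith only [pe3, pe13, hkn, hnbig, hn0]
  have num2 : 2*(k:ℝ) + 2*((n:ℝ)/100) + 9 ≤ (n:ℝ)/2 - ε^3*(n:ℝ) - 1/2 - (5*(k:ℝ)+2) := by
    linarith only [pe3, pe13, hkn, hnk', hnbig, hn0]
  have hbudget : (3/2)*(ε^3*(n:ℝ)^2) + 5*(k:ℝ)*n + (5/2)*n ≤ ε*(n:ℝ)^2 := by
    have hε2sq : ε^2 ≤ 1/10000 := by nlinarith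
    have f1 : ε^3*(n:ℝ)^2 ≤ (1/10000)*(ε*(n:ℝ)^2) := by
      nlinarith [mul_le_mul_of_nonneg_right hε2sq
        (mul_nonneg hε0.le (sq_nonneg (n:ℝ)))]
    have hε12 : ε^12 ≤ 1/10000 := by
      calc ε^12 ≤ ε^2 := pow_le_pow_of_le_one hε0.le hεle1 (by norm_num)
        _ ≤ 1/10000 := hε2sq
    have f2 : 5*(k:ℝ)*n ≤ (5/2)*((1/10000)*(ε*(n:ℝ)^2)) := by
      have g1 : 5*(k:ℝ)*n ≤ (5/2)*(ε^13*n)*n := by nlinarith [hkn, hn0]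
      have g2 : ε^13*(n:ℝ)^2 ≤ (1/10000)*(ε*(n:ℝ)^2) := by
        nlinarith [mul_le_mul_of_nonneg_right hε12
          (mul_nonneg hε0.le (sq_nonneg (n:ℝ)))]
      nlinarith [g1, g2]
    have f3 : (5/2)*(n:ℝ) ≤ (1/3)*(ε*(n:ℝ)^2) := by
      nlinarith [mul_le_mul_of_nonneg_right hεn8 hn0]
    linarith only [f1, f2, f3]
  have hsqrt : Real.sqrt ((e:ℝ) - (n:ℝ)^2/4) ≤ ε^3 * n := by
    have h1 : (e:ℝ) - (n:ℝ)^2/4 ≤ (ε^3*n)^2 := by nlinarith [he2]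
    calc Real.sqrt ((e:ℝ) - (n:ℝ)^2/4) ≤ Real.sqrt ((ε^3*n)^2) := Real.sqrt_le_sqrt h1
      _ = ε^3*n := Real.sqrt_sq (by positivity)
  ------------------------------------------------------------------
  -- structural setup
  set T : Finset V := insert x (insert y S) with hT
  set A : Finset V := G.neighborFinset x \ T with hAdef
  set B : Finset V := G.neighborFinset y \ T with hBdef
  have hmemA : ∀ a ∈ A, G.Adj x a ∧ a ≠ x ∧ a ≠ y ∧ a ∉ S := by
    intro a ha
    rw [hAdef, Finset.mem_sdiff, SimpleGraph.mem_neighborFinset, hT] at ha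
    simp only [Finset.mem_insert, not_or] at ha
    exact ⟨ha.1, ha.2.1, ha.2.2.1, ha.2.2.2⟩
  have hmemB : ∀ b ∈ B, G.Adj y b ∧ b ≠ x ∧ b ≠ y ∧ b ∉ S := by
    intro b hb
    rw [hBdef, Finset.mem_sdiff, SimpleGraph.mem_neighborFinset, hT] at hb
    simp only [Finset.mem_insert, not_or] at hb
    exact ⟨hb.1, hb.2.1, hb.2.2.1, hb.2.2.2⟩
  have hdisjAB : ∀ z : V, z ∈ A → z ∈ B → False := by
    intro z hzA hzB
    obtain ⟨hxz, hzx, hzy, hzS⟩ := hmemA z hzA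
    obtain ⟨hyz, _, _, _⟩ := hmemB z hzB
    have hp : (Walk.cons hxz (Walk.cons hyz.symm Walk.nil)).IsPath := by
      rw [Walk.isPath_def]
      simp [hxy, Ne.symm hzx, hzy]
    obtain ⟨w, hw, hwS⟩ := hP _ hp (Or.inl (by simp))
    simp only [Walk.support_cons, Walk.support_nil, List.mem_cons,
      List.not_mem_nil, or_false] at hw
    rcases hw with rfl | rfl | rfl
    · exact hxS hwS
    · exact hzS hwS
    · exact hyS hwS
  have hnoadj : ∀ a ∈ A, ∀ b ∈ B, ¬ G.Adj a b := by
    intro a ha b hb hadj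
    obtain ⟨hxa, hax, hay, haS⟩ := hmemA a ha
    obtain ⟨hyb, hbx, hby, hbS⟩ := hmemB b hb
    have hp : (Walk.cons hxa (Walk.cons hadj (Walk.cons hyb.symm Walk.nil))).IsPath := by
      rw [Walk.isPath_def]
      simp [hxy, Ne.symm hax, Ne.symm hbx, hay, hadj.ne, hby]
    obtain ⟨w, hw, hwS⟩ := hP _ hp (Or.inr (by simp))
    simp only [Walk.support_cons, Walk.support_nil, List.mem_cons,
      List.not_mem_nil, or_false] at hw
    rcases hw with rfl | rfl | rfl | rfl
    · exact hxS hwS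
    · exact haS hwS
    · exact hbS hwS
    · exact hyS hwS
  have hABdisj : Disjoint A B := by
    rw [Finset.disjoint_left]
    intro z h1 h2
    exact hdisjAB z h1 h2
  set R : Finset V := Finset.univ \ (A ∪ B) with hRdef
  have hRmem : ∀ w : V, w ∉ A → w ∉ B → w ∈ R := by
    intro w h1 h2
    rw [hRdef, Finset.mem_sdiff, Finset.mem_union]
    exact ⟨Finset.mem_univ _, by tauto⟩
  ------------------------------------------------------------------
  -- cardinalities
  have hcardT : T.card ≤ 5*k + 2 := by
    rw [hT]
    calc (insert x (insert y S)).card ≤ (insert y S).card + 1 := Finset.card_insert_le _ _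
      _ ≤ S.card + 1 + 1 := by gcongr; exact Finset.card_insert_le _ _
      _ ≤ 5*k + 2 := by omega
  have hAc : G.degree x ≤ A.card + T.card := by
    rw [hAdef, ← G.card_neighborFinset_eq_degree]
    exact Finset.card_le_card_sdiff_add_card
  have hBc : G.degree y ≤ B.card + T.card := by
    rw [hBdef, ← G.card_neighborFinset_eq_degree]
    exact Finset.card_le_card_sdiff_add_card
  have hRcard : R.card + A.card + B.card = n := by
    have h1 : (A ∪ B).card = A.card + B.card := Finset.card_union_of_disjoint hABdisj
    have h2 : R.card = Fintype.card V - (A ∪ B).card := by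
      rw [hRdef, Finset.card_sdiff_of_subset (Finset.subset_univ _), Finset.card_univ]
    have h3 : (A ∪ B).card ≤ Fintype.card V := Finset.card_le_univ _
    omega
  have hRr : (R.card:ℝ) = (n:ℝ) - A.card - B.card := by
    have h : ((R.card + A.card + B.card : ℕ) : ℝ) = ((n:ℕ):ℝ) := by rw [hRcard]
    push_cast at h
    linarith
  -- real versions
  have hdegx := hδ x
  have hdegy := hδ y
  have hTr : (T.card:ℝ) ≤ 5*(k:ℝ) + 2 := by exact_mod_cast hcardT
  have hAr : (n:ℝ)/2 - ε^3*n - 1/2 - (5*k+2) < (A.card:ℝ) := by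
    have h1 : (G.degree x : ℝ) ≤ (A.card:ℝ) + (T.card:ℝ) := by exact_mod_cast hAc
    linarith
  have hBr : (n:ℝ)/2 - ε^3*n - 1/2 - (5*k+2) < (B.card:ℝ) := by
    have h1 : (G.degree y : ℝ) ≤ (B.card:ℝ) + (T.card:ℝ) := by exact_mod_cast hBc
    linarith
  have hRb : (R.card:ℝ) ≤ 2*ε^3*n + 10*(k:ℝ) + 5 := by
    rw [hRr]; linarith
  ------------------------------------------------------------------
  -- near-clique bounds
  set d : ℕ := n / 100 with hddef
  have hd1 : (d:ℝ) ≤ (n:ℝ)/100 := by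
    have : 100 * d ≤ n := by omega
    have := (Nat.cast_le (α := ℝ)).mpr this
    push_cast at this
    linarith
  have hd2 : (n:ℝ)/100 - 1 ≤ (d:ℝ) := by
    have : n < 100 * d + 100 := by omega
    have := (Nat.cast_lt (α := ℝ)).mpr this
    push_cast at this
    linarith
  have hnearA : ∀ a ∈ A, (A \ G.neighborFinset a).card ≤ d := by
    intro a ha
    have hnat := nearclique_count G A B R hRmem hnoadj a ha
    have hr : ((A \ G.neighborFinset a).card : ℝ) + (G.degree a : ℝ) ≤ (A.card:ℝ) + (R.card:ℝ) := by
      exact_mod_cast hnat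
    have hda := hδ a
    have hbound : ((A \ G.neighborFinset a).card : ℝ) ≤ 2*ε^3*n + 5*(k:ℝ) + 3 := by
      have hABn : (A.card:ℝ) + (R.card:ℝ) = n - B.card := by linarith [hRr]
      rw [hABn] at hr
      linarith
    have : ((A \ G.neighborFinset a).card : ℝ) ≤ (d:ℝ) := by
      linarith only [hbound, num1, hd2]
    exact_mod_cast this
  have hnearB : ∀ b ∈ B, (B \ G.neighborFinset b).card ≤ d := by
    intro b hb
    have hnoadj' : ∀ b' ∈ B, ∀ a ∈ A, ¬ G.Adj b' a := by
      intro b' hb' a ha hadj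
      exact hnoadj a ha b' hb' hadj.symm
    have hRmem' : ∀ w : V, w ∉ B → w ∉ A → w ∈ R := fun w h1 h2 => hRmem w h2 h1
    have hnat := nearclique_count G B A R hRmem' hnoadj' b hb
    have hr : ((B \ G.neighborFinset b).card : ℝ) + (G.degree b : ℝ) ≤ (B.card:ℝ) + (R.card:ℝ) := by
      exact_mod_cast hnat
    have hdb := hδ b
    have hbound : ((B \ G.neighborFinset b).card : ℝ) ≤ 2*ε^3*n + 5*(k:ℝ) + 3 := by
      have hABn : (B.card:ℝ) + (R.card:ℝ) = n - A.card := by linarith [hRr]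
      rw [hABn] at hr
      linarith
    have : ((B \ G.neighborFinset b).card : ℝ) ≤ (d:ℝ) := by
      linarith only [hbound, num1, hd2]
    exact_mod_cast this
  have hbigA : 2*k + 2*d + 9 ≤ A.card := by
    have : (2*(k:ℝ) + 2*(d:ℝ) + 9) ≤ (A.card:ℝ) := by
      linarith only [hd1, hAr, num2]
    exact_mod_cast this
  have hbigB : 2*k + 2*d + 9 ≤ B.card := by
    have : (2*(k:ℝ) + 2*(d:ℝ) + 9) ≤ (B.card:ℝ) := by
      linarith only [hd1, hBr, num2]
    exact_mod_cast this
  ------------------------------------------------------------------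
  -- edge partition
  set EA : Finset (Sym2 V) := G.edgeFinset.filter (fun e => ∀ z ∈ e, z ∈ A) with hEA
  set EB : Finset (Sym2 V) := G.edgeFinset.filter (fun e => ∀ z ∈ e, z ∈ B) with hEB
  set ER : Finset (Sym2 V) := R.biUnion (fun w => G.incidenceFinset w) with hERdef
  have hcover : G.edgeFinset ⊆ EA ∪ EB ∪ ER := by
    intro ed hed
    have hedS : ed ∈ G.edgeSet := SimpleGraph.mem_edgeFinset.mp hed
    induction ed using Sym2.ind with
    | _ u v =>
    have hadj : G.Adj u v := hedS
    have hmemER : ∀ w : V, w ∈ R → w ∈ (s(u,v) : Sym2 V) → s(u,v) ∈ ER := by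
      intro w hwR hwm
      rw [hERdef]
      refine Finset.mem_biUnion.mpr ⟨w, hwR, ?_⟩
      rw [SimpleGraph.mem_incidenceFinset]
      exact ⟨hedS, hwm⟩
    by_cases huA : u ∈ A
    · by_cases hvA : v ∈ A
      · refine Finset.mem_union_left _ (Finset.mem_union_left _ ?_)
        rw [hEA, Finset.mem_filter]
        refine ⟨hed, ?_⟩
        intro z hz
        rw [Sym2.mem_iff] at hz
        rcases hz with rfl | rfl
        · exact huA
        · exact hvA
      · by_cases hvB : v ∈ B
        · exact absurd hadj (hnoadj u huA v hvB)
        · exact Finset.mem_union_right _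
            (hmemER v (hRmem v hvA hvB) (Sym2.mem_mk_right _ _))
    · by_cases huB : u ∈ B
      · by_cases hvB : v ∈ B
        · refine Finset.mem_union_left _ (Finset.mem_union_right _ ?_)
          rw [hEB, Finset.mem_filter]
          refine ⟨hed, ?_⟩
          intro z hz
          rw [Sym2.mem_iff] at hz
          rcases hz with rfl | rfl
          · exact huB
          · exact hvB
        · by_cases hvA : v ∈ A
          · exact absurd hadj.symm (hnoadj v hvA u huB)
          · exact Finset.mem_union_right _
              (hmemER v (hRmem v hvA hvB) (Sym2.mem_mk_right _ _))
      · exact Finset.mem_union_right _ (hmemER u (hRmem u huA huB) (Sym2.mem_mk_left _ _))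
  have hER : ER.card ≤ R.card * n := by
    calc ER.card ≤ ∑ w ∈ R, (G.incidenceFinset w).card := Finset.card_biUnion_le
      _ ≤ ∑ _w ∈ R, n := by
          refine Finset.sum_le_sum ?_
          intro w _
          rw [G.card_incidenceFinset_eq_degree]
          exact le_of_lt (hn ▸ G.degree_lt_card_verts w)
      _ = R.card * n := by rw [Finset.sum_const, smul_eq_mul]
  have he_nat : G.edgeFinset.card = e := by
    rw [← he, ← G.coe_edgeFinset, Set.ncard_coe_finset]
  have hsplit : e ≤ EA.card + EB.card + ER.card := by
    calc e = G.edgeFinset.card := he_nat.symm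
      _ ≤ (EA ∪ EB ∪ ER).card := Finset.card_le_card hcover
      _ ≤ (EA ∪ EB).card + ER.card := Finset.card_union_le _ _
      _ ≤ EA.card + EB.card + ER.card := by
          have := Finset.card_union_le EA EB
          omega
  ------------------------------------------------------------------
  -- color count
  have hcolors_eq : ((χ '' G.edgeSet).ncard : ℝ) = ((G.edgeFinset.image χ).card : ℝ) := by
    rw [← G.coe_edgeFinset, ← Finset.coe_image, Set.ncard_coe_finset]
  have keyA : (EA.card : ℝ) ≤ ((G.edgeFinset.image χ).card : ℝ) := by
    exact_mod_cast colors_ge G A d k hk hnearA hbigA χ hχ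
  have keyB : (EB.card : ℝ) ≤ ((G.edgeFinset.image χ).card : ℝ) := by
    exact_mod_cast colors_ge G B d k hk hnearB hbigB χ hχ
  ------------------------------------------------------------------
  -- final arithmetic
  have hERr : (ER.card : ℝ) ≤ (R.card:ℝ) * n := by exact_mod_cast hER
  have hsplitr : (e:ℝ) ≤ (EA.card:ℝ) + (EB.card:ℝ) + (ER.card:ℝ) := by exact_mod_cast hsplit
  rw [hcolors_eq]
  have hRn : (R.card:ℝ)*n ≤ (2*ε^3*(n:ℝ) + 10*(k:ℝ) + 5)*n :=
    mul_le_mul_of_nonneg_right hRb hn0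
  have hs : (n:ℝ)/2 * Real.sqrt ((e:ℝ) - (n:ℝ)^2/4) ≤ (n:ℝ)/2 * (ε^3*n) :=
    mul_le_mul_of_nonneg_left hsqrt (by positivity)
  by_cases hside : EB.card ≤ EA.card
  · have hside' : (EB.card:ℝ) ≤ (EA.card:ℝ) := by exact_mod_cast hside
    have h2EA : (e:ℝ) ≤ 2*(EA.card:ℝ) + (R.card:ℝ)*n := by
      linarith only [hsplitr, hERr, hside']
    have : (e:ℝ)/2 + (n:ℝ)/2 * Real.sqrt ((e:ℝ) - (n:ℝ)^2/4) - ε*(n:ℝ)^2 ≤ (EA.card:ℝ) := by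
      linarith only [hs, hRn, hbudget, h2EA]
    linarith only [this, keyA]
  · push_neg at hside
    have hside' : (EA.card:ℝ) ≤ (EB.card:ℝ) := by
      exact_mod_cast hside.le
    have h2EB : (e:ℝ) ≤ 2*(EB.card:ℝ) + (R.card:ℝ)*n := by
      linarith only [hsplitr, hERr, hside']
    have : (e:ℝ)/2 + (n:ℝ)/2 * Real.sqrt ((e:ℝ) - (n:ℝ)^2/4) - ε*(n:ℝ)^2 ≤ (EB.card:ℝ) := by
      linarith only [hs, hRn, hbudget, h2EB]
    linarith only [this, keyB]
end
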